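/- arXiv:0810.0345 — 11 statements merged into one kernel-verified Lean document; each statement's English description precedes it below -/
import Mathlib

section
/- Let G be a group and let Cyc(G) = {x ∈ G : ⟨x,y⟩ is cyclic for all y ∈ G}. If x, y ∈ G are such that the image of ⟨x,y⟩ in G/Cyc(G) is cyclic, then ⟨x,y⟩ is cyclic in G. -/
/-- The cyclicizer of a group: elements generating a cyclic subgroup with every element. -/
def cyclicizer (G : Type*) [Group G] : Set G :=
  {x | ∀ y : G, IsCyclic (Subgroup.closure {x, y} : Subgroup G)}

/-- The relative cyclicizer of an element. -/
def relCyclicizer {G : Type*} [Group G] (x : G) : Set G :=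
  {g | IsCyclic (Subgroup.closure {g, x} : Subgroup G)}

/-- A group is locally cyclic if every finitely generated subgroup is cyclic. -/
def IsLocallyCyclic (G : Type*) [Group G] : Prop :=
  ∀ H : Subgroup G, H.FG → IsCyclic H

/-- The non-cyclic graph of a group. -/
def noncyclicGraph (G : Type*) [Group G] :
    SimpleGraph {g : G // g ∉ cyclicizer G} where
  Adj x y := x ≠ y ∧ ¬ IsCyclic (Subgroup.closure {(x : G), (y : G)} : Subgroup G)
  symm := ⟨fun x y h => ⟨h.1.symm, by rw [Set.pair_comm]; exact h.2⟩⟩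
  loopless := ⟨fun x h => h.1 rfl⟩

/-- The cyclic graph of a group (complement of the non-cyclic graph). -/
def cyclicGraph (G : Type*) [Group G] :
    SimpleGraph {g : G // g ∉ cyclicizer G} where
  Adj x y := x ≠ y ∧ IsCyclic (Subgroup.closure {(x : G), (y : G)} : Subgroup G)
  symm := ⟨fun x y h => ⟨h.1.symm, by rw [Set.pair_comm]; exact h.2⟩⟩
  loopless := ⟨fun x h => h.1 rfl⟩

/-- A graph has clique number `n` if it has a clique of size `n` and no larger clique. -/
def hasCliqueNum {V : Type*} (Γ : SimpleGraph V) (n : ℕ) : Prop :=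
  (∃ s : Finset V, Γ.IsNClique n s) ∧ ∀ s : Finset V, Γ.IsClique (s : Set V) → s.card ≤ n

lemma isCyclic_of_le' {G : Type*} [Group G] {H K : Subgroup G} (hle : H ≤ K)
    (hK : IsCyclic K) : IsCyclic H := by
  haveI := hK
  haveI : IsCyclic (H.subgroupOf K) := Subgroup.isCyclic _
  exact isCyclic_of_surjective (Subgroup.subgroupOfEquivOfLe hle)
    (Subgroup.subgroupOfEquivOfLe hle).surjective

lemma exists_gen_pair {G : Type*} [Group G] {a b : G}
    (h : IsCyclic (Subgroup.closure {a, b} : Subgroup G)) :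
    ∃ w ∈ Subgroup.closure {a, b}, (∃ i : ℤ, w ^ i = a) ∧ ∃ j : ℤ, w ^ j = b := by
  obtain ⟨g, hg⟩ := h.exists_generator
  have ha : a ∈ Subgroup.closure ({a, b} : Set G) :=
    Subgroup.subset_closure (by simp)
  have hb : b ∈ Subgroup.closure ({a, b} : Set G) :=
    Subgroup.subset_closure (by simp)
  obtain ⟨i, hi⟩ := hg ⟨a, ha⟩
  obtain ⟨j, hj⟩ := hg ⟨b, hb⟩
  exact ⟨g, g.2, ⟨i, congrArg Subtype.val hi⟩, ⟨j, congrArg Subtype.val hj⟩⟩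

theorem cyclic_of_cyclic_image_in_quotient_by_cyclicizer
    {G : Type*} [Group G] (N : Subgroup G) [N.Normal]
    (hN : (N : Set G) = cyclicizer G) (x y : G)
    (h : IsCyclic (Subgroup.closure {(x : G ⧸ N), (y : G ⧸ N)} : Subgroup (G ⧸ N))) :
    IsCyclic (Subgroup.closure {x, y} : Subgroup G) := by
  obtain ⟨ζ, -, ⟨i, hi⟩, ⟨j, hj⟩⟩ := exists_gen_pair h
  obtain ⟨z, rfl⟩ := QuotientGroup.mk_surjective ζ
  -- x = z^i * u with u ∈ N
  have hu : (z ^ i)⁻¹ * x ∈ N := by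
    rw [← QuotientGroup.eq]
    simpa using hi
  have hv : (z ^ j)⁻¹ * y ∈ N := by
    rw [← QuotientGroup.eq]
    simpa using hj
  set u := (z ^ i)⁻¹ * x with hu_def
  set v := (z ^ j)⁻¹ * y with hv_def
  have hucyc : u ∈ cyclicizer G := hN ▸ hu
  have hvcyc : v ∈ cyclicizer G := hN ▸ hv
  -- ⟨u, z⟩ is cyclic, generated by w
  obtain ⟨w, -, ⟨c, hc⟩, ⟨d, hd⟩⟩ := exists_gen_pair (hucyc z)
  -- ⟨v, w⟩ is cyclic
  have hK : IsCyclic (Subgroup.closure {v, w} : Subgroup G) := hvcyc w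
  refine isCyclic_of_le' ?_ hK
  rw [Subgroup.closure_le]
  have hwK : w ∈ Subgroup.closure ({v, w} : Set G) :=
    Subgroup.subset_closure (by simp)
  have hvK : v ∈ Subgroup.closure ({v, w} : Set G) :=
    Subgroup.subset_closure (by simp)
  have hxK : x ∈ Subgroup.closure ({v, w} : Set G) := by
    have : x = w ^ (d * i) * w ^ c := by
      rw [zpow_mul, hd, hc, hu_def]
      group
    rw [this]
    exact mul_mem (zpow_mem hwK _) (zpow_mem hwK _)
  have hyK : y ∈ Subgroup.closure ({v, w} : Set G) := by
    have : y = w ^ (d * j) * v := by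
      rw [zpow_mul, hd, hv_def]
      group
    rw [this]
    exact mul_mem (zpow_mem hwK _) hvK
  intro g hg
  rcases hg with rfl | rfl
  · exact hxK
  · exact hyK
end

section
/- If G is a group that is not locally cyclic, then there exist two elements x, y ∈ G such that no two of the three elements x, y, xy generate a cyclic subgroup pairwise; i.e., ⟨x,y⟩, ⟨x,xy⟩, and ⟨y,xy⟩ are all non-cyclic. (Hence the non-cyclic graph of G has clique number at least 3.) -/
lemma subgroup_isCyclic_iff {G : Type*} [Group G] (H : Subgroup G) :
    IsCyclic H ↔ ∃ g : G, H = Subgroup.zpowers g := by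
  constructor
  · rintro ⟨⟨g, hg⟩, hgen⟩
    refine ⟨g, le_antisymm ?_ ?_⟩
    · intro x hx
      obtain ⟨n, hn⟩ := hgen ⟨x, hx⟩
      exact ⟨n, congrArg Subtype.val hn⟩
    · exact (Subgroup.zpowers_le).2 hg
  · rintro ⟨g, rfl⟩
    exact ⟨⟨⟨g, Subgroup.mem_zpowers g⟩, fun ⟨x, n, hn⟩ => ⟨n, Subtype.ext (by simpa using hn)⟩⟩⟩

lemma exists_pair_of_not_locallyCyclic {G : Type*} [Group G]
    (h : ¬ ∀ H : Subgroup G, H.FG → IsCyclic H) :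
    ∃ x y : G, ¬ IsCyclic (Subgroup.closure {x, y} : Subgroup G) := by
  classical
  by_contra hc
  push_neg at hc
  apply h
  rintro H ⟨S, rfl⟩
  induction S using Finset.induction_on with
  | empty =>
    rw [Finset.coe_empty, Subgroup.closure_empty]
    infer_instance
  | @insert a S _ ih =>
    obtain ⟨c, hcS⟩ := (subgroup_isCyclic_iff _).1 ih
    have : Subgroup.closure (insert a S : Finset G) = Subgroup.closure {a, c} := by
      rw [Finset.coe_insert, Set.insert_eq, Subgroup.closure_union, hcS,
        Set.insert_eq, Subgroup.closure_union, Subgroup.zpowers_eq_closure]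
    rw [this]
    exact hc a c

theorem exists_triangle_of_not_locallyCyclic'
    {G : Type*} [Group G] (h : ¬ ∀ H : Subgroup G, H.FG → IsCyclic H) :
    ∃ x y : G, ¬ IsCyclic (Subgroup.closure {x, y} : Subgroup G) ∧
      ¬ IsCyclic (Subgroup.closure {x, x * y} : Subgroup G) ∧
      ¬ IsCyclic (Subgroup.closure {y, x * y} : Subgroup G) := by
  obtain ⟨x, y, hxy⟩ := exists_pair_of_not_locallyCyclic h
  have hx : x ∈ Subgroup.closure ({x, y} : Set G) :=
    Subgroup.subset_closure (by simp)
  have hy : y ∈ Subgroup.closure ({x, y} : Set G) :=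
    Subgroup.subset_closure (by simp)
  have h1 : Subgroup.closure ({x, x * y} : Set G) = Subgroup.closure {x, y} := by
    apply le_antisymm
    · rw [Subgroup.closure_le]
      rintro z (rfl | rfl)
      · exact hx
      · exact mul_mem hx hy
    · rw [Subgroup.closure_le]
      have hx' : x ∈ Subgroup.closure ({x, x * y} : Set G) :=
        Subgroup.subset_closure (by simp)
      have hxy' : x * y ∈ Subgroup.closure ({x, x * y} : Set G) :=
        Subgroup.subset_closure (by simp)
      rintro z (rfl | rfl)
      · exact hx'
      · simpa using mul_mem (inv_mem hx') hxy'
  have h2 : Subgroup.closure ({y, x * y} : Set G) = Subgroup.closure {x, y} := by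
    apply le_antisymm
    · rw [Subgroup.closure_le]
      rintro z (rfl | rfl)
      · exact hy
      · exact mul_mem hx hy
    · rw [Subgroup.closure_le]
      have hy' : y ∈ Subgroup.closure ({y, x * y} : Set G) :=
        Subgroup.subset_closure (by simp)
      have hxy' : x * y ∈ Subgroup.closure ({y, x * y} : Set G) :=
        Subgroup.subset_closure (by simp)
      rintro z (rfl | rfl)
      · simpa using mul_mem hxy' (inv_mem hy')
      · exact hy'
  exact ⟨x, y, hxy, by rw [h1]; exact hxy, by rw [h2]; exact hxy⟩

theorem exists_triangle_of_not_locallyCyclic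
    {G : Type*} [Group G] (h : ¬ IsLocallyCyclic G) :
    ∃ x y : G, ¬ IsCyclic (Subgroup.closure {x, y} : Subgroup G) ∧
      ¬ IsCyclic (Subgroup.closure {x, x * y} : Subgroup G) ∧
      ¬ IsCyclic (Subgroup.closure {y, x * y} : Subgroup G) := by
  exact exists_triangle_of_not_locallyCyclic' h
end

section
/- Let G be a finite non-cyclic p-group (p prime). Then the cyclic graph of G is disconnected: there exist two vertices in G \ Cyc(G) that cannot be joined by a path, where vertices are elements of G \ Cyc(G) and two distinct vertices are adjacent iff they generate a cyclic subgroup. -/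
section Aux

open Subgroup

variable {G : Type*} [Group G]

lemma aux_zpowers_isCyclic (y : G) : IsCyclic (Subgroup.zpowers y) := by
  refine ⟨⟨⟨y, Subgroup.mem_zpowers y⟩, ?_⟩⟩
  rintro ⟨x, k, rfl⟩
  exact ⟨k, Subtype.ext (by simp)⟩

lemma aux_closure_pair_cyclic {x y : G} (h : x ∈ Subgroup.zpowers y) :
    IsCyclic (Subgroup.closure {x, y} : Subgroup G) := by
  have heq : Subgroup.closure {x, y} = Subgroup.zpowers y := by
    apply le_antisymm
    · rw [Subgroup.closure_le]
      intro z hz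
      simp only [Set.mem_insert_iff, Set.mem_singleton_iff] at hz
      rcases hz with rfl | rfl
      · exact h
      · exact Subgroup.mem_zpowers _
    · exact Subgroup.zpowers_le.mpr
        (Subgroup.subset_closure (Set.mem_insert_of_mem _ rfl))
  rw [heq]
  exact aux_zpowers_isCyclic y

lemma aux_mem_zpowers_of_orderOf_dvd [Finite G] {g x y : G}
    (hx : x ∈ Subgroup.zpowers g) (hy : y ∈ Subgroup.zpowers g)
    (h : orderOf x ∣ orderOf y) : x ∈ Subgroup.zpowers y := by
  rw [← mem_powers_iff_mem_zpowers] at hx hy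
  obtain ⟨i, hi'⟩ := hx
  obtain ⟨j, hj'⟩ := hy
  have hi : g ^ i = x := hi'
  have hj : g ^ j = y := hj'
  clear hi' hj' 
  set m := orderOf g with hm
  have hm0 : m ≠ 0 := (orderOf_pos g).ne'
  set dx := Nat.gcd m i with hdx
  set dy := Nat.gcd m j with hdy
  have hox : orderOf x = m / dx := by rw [← hi, orderOf_pow]
  have hoy : orderOf y = m / dy := by rw [← hj, orderOf_pow]
  have hdxm : dx ∣ m := Nat.gcd_dvd_left m i
  have hdym : dy ∣ m := Nat.gcd_dvd_left m j
  have hdyx : dy ∣ dx := by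
    rw [hox, hoy] at h
    obtain ⟨c, hc⟩ := h
    have h1 : m = m / dx * (c * dy) := by
      rw [← mul_assoc, ← hc, Nat.div_mul_cancel hdym]
    have h2 : m = m / dx * dx := (Nat.div_mul_cancel hdxm).symm
    have hpos : 0 < m / dx := Nat.div_pos (Nat.le_of_dvd (Nat.pos_of_ne_zero hm0) hdxm)
      (Nat.pos_of_dvd_of_pos hdxm (Nat.pos_of_ne_zero hm0))
    have := h2.symm.trans h1
    exact ⟨c, (Nat.eq_of_mul_eq_mul_left hpos this).trans (mul_comm c dy)⟩
  have hdyi : dy ∣ i := hdyx.trans (Nat.gcd_dvd_right m i)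
  have hkey : g ^ dy ∈ Subgroup.zpowers y := by
    refine ⟨Nat.gcdB m j, ?_⟩
    have hbez : (dy : ℤ) = m * Nat.gcdA m j + j * Nat.gcdB m j := Nat.gcd_eq_gcd_ab m j
    have hgm : g ^ (m : ℤ) = 1 := by
      rw [zpow_natCast]; exact pow_orderOf_eq_one g
    show y ^ Nat.gcdB m j = g ^ dy
    have e1 : y ^ Nat.gcdB m j = g ^ ((j : ℤ) * Nat.gcdB m j) := by
      rw [← hj, ← zpow_natCast g j, ← zpow_mul]
    have e2 : g ^ ((dy : ℤ)) = g ^ ((j : ℤ) * Nat.gcdB m j) := by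
      rw [hbez, zpow_add, zpow_mul, hgm, one_zpow, one_mul]
    rw [e1, ← e2, zpow_natCast]
  have hxeq : x = (g ^ dy) ^ (i / dy) := by
    rw [← pow_mul, Nat.mul_div_cancel' hdyi, hi]
  rw [hxeq]
  exact Subgroup.pow_mem _ hkey _

lemma aux_exists_gen {H : Subgroup G} (h : IsCyclic H) :
    ∃ g ∈ H, ∀ x ∈ H, x ∈ Subgroup.zpowers g := by
  haveI := h
  obtain ⟨⟨g, hg⟩, hgen⟩ := IsCyclic.exists_generator (α := H)
  refine ⟨g, hg, fun x hx => ?_⟩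
  obtain ⟨k, hk⟩ := hgen ⟨x, hx⟩
  exact ⟨k, by simpa [Subtype.ext_iff] using hk⟩

end Aux

theorem cyclicGraph_disconnected_of_pGroup
    {G : Type*} [Group G] [Finite G] (p : ℕ) (hp : p.Prime)
    (hpg : IsPGroup p G) (hG : ¬ IsCyclic G) :
    ∃ v w : {g : G // g ∉ cyclicizer G}, ¬ (cyclicGraph G).Reachable v w := by
  classical
  haveI : Fact p.Prime := ⟨hp⟩
  have horder : ∀ g : G, ∃ k : ℕ, orderOf g = p ^ k := IsPGroup.iff_orderOf.mp hpg
  have hdvd : ∀ x y : G, orderOf x ≤ orderOf y → orderOf x ∣ orderOf y := by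
    intro x y hle
    obtain ⟨i, hi⟩ := horder x
    obtain ⟨j, hj⟩ := horder y
    rw [hi, hj] at hle ⊢
    exact pow_dvd_pow p ((Nat.pow_le_pow_iff_right hp.one_lt).mp hle)
  -- existence of two distinct cyclic subgroups of the same order
  have hex : ∃ m : ℕ, ∃ a b : G, orderOf a = m ∧ orderOf b = m ∧
      Subgroup.zpowers a ≠ Subgroup.zpowers b := by
    by_contra hcon
    push_neg at hcon
    apply hG
    obtain ⟨g, hmax⟩ := Finite.exists_max (fun x : G => orderOf x)
    refine ⟨⟨g, fun x => ?_⟩⟩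
    have hdv : orderOf x ∣ orderOf g := hdvd x g (hmax x)
    set z := g ^ (orderOf g / orderOf x) with hz
    have hoz : orderOf z = orderOf x := orderOf_pow_orderOf_div (orderOf_pos g).ne' hdv
    have heq : Subgroup.zpowers x = Subgroup.zpowers z := hcon (orderOf x) x z rfl hoz
    have hzg : z ∈ Subgroup.zpowers g := Subgroup.pow_mem _ (Subgroup.mem_zpowers g) _
    exact Subgroup.zpowers_le.mpr hzg (heq ▸ Subgroup.mem_zpowers x)
  set n := Nat.find hex with hn
  obtain ⟨a, b, hoa, hob, hne⟩ := Nat.find_spec hex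
  have hmin : ∀ m, m < n → ∀ x y : G, orderOf x = m → orderOf y = m →
      Subgroup.zpowers x = Subgroup.zpowers y := by
    intro m hm x y hx hy
    by_contra hne'
    exact Nat.find_min hex hm ⟨x, y, hx, hy, hne'⟩
  -- every element of order < n is in the cyclicizer
  have hsmall : ∀ x : G, orderOf x < n → x ∈ cyclicizer G := by
    intro x hx y
    rcases le_total (orderOf x) (orderOf y) with hle | hle
    · have hdv := hdvd x y hle
      set z := y ^ (orderOf y / orderOf x) with hz
      have hoz : orderOf z = orderOf x := orderOf_pow_orderOf_div (orderOf_pos y).ne' hdv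
      have heq : Subgroup.zpowers x = Subgroup.zpowers z :=
        hmin (orderOf x) hx x z rfl hoz
      have hzy : z ∈ Subgroup.zpowers y := Subgroup.pow_mem _ (Subgroup.mem_zpowers y) _
      have hxy : x ∈ Subgroup.zpowers y :=
        Subgroup.zpowers_le.mpr hzy (heq ▸ Subgroup.mem_zpowers x)
      exact aux_closure_pair_cyclic hxy
    · have hdv := hdvd y x hle
      have hoy : orderOf y < n := lt_of_le_of_lt hle hx
      set z := x ^ (orderOf x / orderOf y) with hz
      have hoz : orderOf z = orderOf y := orderOf_pow_orderOf_div (orderOf_pos x).ne' hdv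
      have heq : Subgroup.zpowers y = Subgroup.zpowers z :=
        hmin (orderOf y) hoy y z rfl hoz
      have hzx : z ∈ Subgroup.zpowers x := Subgroup.pow_mem _ (Subgroup.mem_zpowers x) _
      have hyx : y ∈ Subgroup.zpowers x :=
        Subgroup.zpowers_le.mpr hzx (heq ▸ Subgroup.mem_zpowers y)
      rw [Set.pair_comm]
      exact aux_closure_pair_cyclic hyx
  -- a and b are not joined by a cyclic subgroup
  have hnc : ¬ IsCyclic (Subgroup.closure {a, b} : Subgroup G) := by
    intro hcyc
    obtain ⟨g, hgH, hgen⟩ := aux_exists_gen hcyc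
    have haH : a ∈ Subgroup.closure {a, b} := Subgroup.subset_closure (Set.mem_insert _ _)
    have hbH : b ∈ Subgroup.closure {a, b} :=
      Subgroup.subset_closure (Set.mem_insert_of_mem _ rfl)
    have h1 : a ∈ Subgroup.zpowers b :=
      aux_mem_zpowers_of_orderOf_dvd (hgen a haH) (hgen b hbH) (by rw [hoa, hob])
    have h2 : b ∈ Subgroup.zpowers a :=
      aux_mem_zpowers_of_orderOf_dvd (hgen b hbH) (hgen a haH) (by rw [hoa, hob])
    exact hne (le_antisymm (Subgroup.zpowers_le.mpr h1) (Subgroup.zpowers_le.mpr h2))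
  have ha : a ∉ cyclicizer G := fun h => hnc (h b)
  have hb : b ∉ cyclicizer G := fun h => hnc (by rw [Set.pair_comm]; exact h a)
  refine ⟨⟨a, ha⟩, ⟨b, hb⟩, fun hreach => ?_⟩
  obtain ⟨pw⟩ := hreach
  -- walk invariant: a stays in the zpowers of each vertex
  have key : ∀ (u w : {g : G // g ∉ cyclicizer G}) (q : (cyclicGraph G).Walk u w),
      a ∈ Subgroup.zpowers (u : G) → a ∈ Subgroup.zpowers (w : G) := by
    intro u w q
    induction q with
    | nil => exact id
    | @cons u v w hadj q ih =>
      intro hau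
      apply ih
      obtain ⟨g, hgH, hgen⟩ := aux_exists_gen hadj.2
      have huH : (u : G) ∈ Subgroup.closure {(u : G), (v : G)} :=
        Subgroup.subset_closure (Set.mem_insert _ _)
      have hvH : (v : G) ∈ Subgroup.closure {(u : G), (v : G)} :=
        Subgroup.subset_closure (Set.mem_insert_of_mem _ rfl)
      have haH : a ∈ Subgroup.closure {(u : G), (v : G)} :=
        Subgroup.zpowers_le.mpr huH hau
      have hnv : n ≤ orderOf (v : G) := by
        by_contra hlt
        push_neg at hlt
        exact v.2 (hsmall _ hlt)
      exact aux_mem_zpowers_of_orderOf_dvd (hgen a haH) (hgen _ hvH)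
        (hdvd a v (by rw [hoa]; exact hnv))
  have h1 : a ∈ Subgroup.zpowers b := key _ _ pw (Subgroup.mem_zpowers a)
  have h2 : b ∈ Subgroup.zpowers a :=
    aux_mem_zpowers_of_orderOf_dvd (Subgroup.mem_zpowers b) h1 (by rw [hoa, hob])
  exact hne (le_antisymm (Subgroup.zpowers_le.mpr h1) (Subgroup.zpowers_le.mpr h2))
end

section
/- Let G be a finite non-cyclic group of prime power order p^n. Then G has more than one subgroup of order p, unless some non-trivial element lies in Cyc(G). More precisely, if Cyc(G) = 1 and G is a non-cyclic p-group, then G has at least two distinct subgroups of order p. -/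
lemma zpowers_isCyclic' {G : Type*} [Group G] (b : G) : IsCyclic (Subgroup.zpowers b) := by
  refine ⟨⟨⟨b, Subgroup.mem_zpowers b⟩, fun x => ?_⟩⟩
  obtain ⟨k, hk⟩ := Subgroup.mem_zpowers_iff.mp x.2
  exact ⟨k, Subtype.ext (by simpa using hk)⟩

theorem two_subgroups_of_order_p_of_trivial_cyclicizer
    {G : Type*} [Group G] [Finite G] (p : ℕ) (hp : p.Prime)
    (hpg : IsPGroup p G) (hG : ¬ IsCyclic G)
    (hcyc : cyclicizer G = {1}) :
    ∃ H K : Subgroup G, H ≠ K ∧ Nat.card H = p ∧ Nat.card K = p := by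
  have hp' : Fact p.Prime := ⟨hp⟩
  have hnt : Nontrivial G := by
    rcases subsingleton_or_nontrivial G with h | h
    · exact absurd (isCyclic_of_subsingleton) hG
    · exact h
  have hdvd : p ∣ Nat.card G := by
    obtain ⟨n, hn⟩ := IsPGroup.iff_card.mp hpg
    rcases n with _ | n
    · simp only [pow_zero] at hn
      exact absurd hn (Finite.one_lt_card.ne')
    · rw [hn]; exact dvd_pow_self p n.succ_ne_zero
  obtain ⟨g, hg⟩ := exists_prime_orderOf_dvd_card' p hdvd
  have hzg : Nat.card (Subgroup.zpowers g) = p := by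
    rw [Nat.card_zpowers]; exact hg
  by_contra hcon
  push_neg at hcon
  have huniq : ∀ K : Subgroup G, Nat.card K = p → K = Subgroup.zpowers g := by
    intro K hK
    by_contra hne
    exact hcon K (Subgroup.zpowers g) hne hK hzg
  have key : ∀ a b : G, a ∈ Subgroup.zpowers b →
      IsCyclic (Subgroup.closure {a, b} : Subgroup G) := by
    intro a b hab
    have heq : Subgroup.closure {a, b} = Subgroup.zpowers b := by
      apply le_antisymm
      · rw [Subgroup.closure_le]
        rintro x hx
        simp only [Set.mem_insert_iff, Set.mem_singleton_iff] at hx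
        rcases hx with rfl | h
        · exact hab
        · rw [h]; exact Subgroup.mem_zpowers b
      · rw [Subgroup.zpowers_le]
        exact Subgroup.subset_closure (show b ∈ ({a, b} : Set G) by simp)
    rw [heq]
    exact zpowers_isCyclic' b
  have hgc : g ∈ cyclicizer G := by
    intro y
    by_cases hy : y = 1
    · subst hy
      have : Subgroup.closure ({g, (1 : G)} : Set G) = Subgroup.closure {(1 : G), g} := by
        rw [Set.pair_comm]
      rw [this]
      exact key 1 g (Subgroup.one_mem _)
    · obtain ⟨k, hk⟩ := hpg y
      have hdvd' : orderOf y ∣ p ^ k := orderOf_dvd_of_pow_eq_one hk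
      obtain ⟨m, -, hm⟩ := (Nat.dvd_prime_pow hp).mp hdvd'
      have hm1 : m ≠ 0 := by
        rintro rfl
        rw [pow_zero] at hm
        exact hy (orderOf_eq_one_iff.mp hm)
      have hpd : p ∣ orderOf y := hm ▸ dvd_pow_self p hm1
      set z := y ^ (orderOf y / p) with hz
      have hoz : orderOf z = p :=
        orderOf_pow_orderOf_div (orderOf_pos y).ne' hpd
      have hzy : z ∈ Subgroup.zpowers y :=
        Subgroup.pow_mem _ (Subgroup.mem_zpowers y) _
      have hKz : Nat.card (Subgroup.zpowers z) = p := by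
        rw [Nat.card_zpowers]; exact hoz
      have : Subgroup.zpowers z = Subgroup.zpowers g := huniq _ hKz
      have hgz : g ∈ Subgroup.zpowers y := by
        have hg' : g ∈ Subgroup.zpowers z := this ▸ Subgroup.mem_zpowers g
        exact Subgroup.zpowers_le.mpr hzy hg'
      exact key g y hgz
  rw [hcyc, Set.mem_singleton_iff] at hgc
  rw [hgc, orderOf_one] at hg
  exact hp.one_lt.ne' hg.symm
end

section
/- Let G be a non-locally-cyclic group. Then the cyclic graph of G (vertices G \ Cyc(G), edges between distinct x, y with ⟨x,y⟩ cyclic) is never a complete graph: there exist two distinct vertices x, y ∈ G \ Cyc(G) with ⟨x,y⟩ not cyclic. -/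
lemma aux_cyclic_eq_zpowers {G : Type*} [Group G] (K : Subgroup G) (hK : IsCyclic K) :
    ∃ d : G, K = Subgroup.zpowers d := by
  obtain ⟨⟨d, hd⟩, hgen⟩ := hK.exists_generator
  refine ⟨d, le_antisymm ?_ ?_⟩
  · intro x hx
    obtain ⟨n, hn⟩ := hgen ⟨x, hx⟩
    exact ⟨n, congrArg Subtype.val hn⟩
  · exact Subgroup.zpowers_le.mpr hd

lemma isCyclic_zpowers {G : Type*} [Group G] (x : G) :
    IsCyclic (Subgroup.zpowers x) := by
  refine ⟨⟨⟨x, Subgroup.mem_zpowers x⟩, ?_⟩⟩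
  rintro ⟨y, hy⟩
  obtain ⟨n, hn⟩ := hy
  exact ⟨n, Subtype.ext (by simpa using hn)⟩

lemma aux_locally {G : Type*} [Group G]
    (hp : ∀ x y : G, IsCyclic (Subgroup.closure {x, y} : Subgroup G)) :
    IsLocallyCyclic G := by
  classical
  intro H hH
  obtain ⟨S, rfl⟩ := hH
  induction S using Finset.induction_on with
  | empty =>
    rw [Finset.coe_empty, Subgroup.closure_empty]
    exact isCyclic_of_subsingleton
  | @insert a S ha ih =>
    obtain ⟨d, hd⟩ := aux_cyclic_eq_zpowers _ ih
    have : (Subgroup.closure (insert a S : Finset G) : Subgroup G)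
        = Subgroup.closure {a, d} := by
      rw [Finset.coe_insert, Set.insert_eq, Subgroup.closure_union, hd,
        Subgroup.zpowers_eq_closure, ← Subgroup.closure_union, ← Set.insert_eq]
    rw [this]
    exact hp a d

theorem cyclicGraph_not_complete
    {G : Type*} [Group G] (h : ¬ IsLocallyCyclic G) :
    ∃ x y : G, x ∉ cyclicizer G ∧ y ∉ cyclicizer G ∧ x ≠ y ∧
      ¬ IsCyclic (Subgroup.closure {x, y} : Subgroup G) := by
  by_contra hc
  push_neg at hc
  apply h
  apply aux_locally
  intro x y
  by_cases hx : x ∈ cyclicizer G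
  · exact hx y
  by_cases hy : y ∈ cyclicizer G
  · rw [Set.pair_comm]; exact hy x
  by_cases hxy : x = y
  · subst hxy
    rw [Set.pair_eq_singleton, ← Subgroup.zpowers_eq_closure]
    exact isCyclic_zpowers x
  · exact hc x y hx hy hxy
end

section
/- Let G be a finite group with Cyc(G) = 1 and let p be a prime dividing |G|. Then the number ν_p(G) of subgroups of order p in G is at most the clique number of the non-cyclic graph of G. -/
open Subgroup

/-- In a finite group, if two elements of prime order `p` generate a cyclic subgroup,
then one is a power of the other. -/
lemma key_zpowers_le {G : Type*} [Group G] [Finite G] {p : ℕ} (hp : p.Prime)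
    {x y : G} (hx : orderOf x = p) (hy : orderOf y = p)
    (hcyc : IsCyclic (Subgroup.closure {x, y} : Subgroup G)) :
    zpowers y ≤ zpowers x := by
  classical
  set C := Subgroup.closure ({x, y} : Set G) with hC
  have hxC : x ∈ C := Subgroup.subset_closure (by simp)
  have hyC : y ∈ C := Subgroup.subset_closure (by simp)
  haveI : Fintype C := Fintype.ofFinite C
  haveI := hcyc
  set x' : C := ⟨x, hxC⟩
  set y' : C := ⟨y, hyC⟩
  have hox : orderOf x' = p := by rw [Subgroup.orderOf_mk, hx]
  have hoy : orderOf y' = p := by rw [Subgroup.orderOf_mk, hy]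
  have hcard : (Finset.filter (fun a : C => a ^ p = 1) Finset.univ).card ≤ p := by
    have := IsCyclic.card_pow_eq_one_le (α := C) (n := p) hp.pos
    convert this using 2
  have hsub : (zpowers x' : Set C).toFinset ⊆ Finset.filter (fun a : C => a ^ p = 1) Finset.univ := by
    intro a ha
    rw [Set.mem_toFinset] at ha
    simp only [Finset.mem_filter, Finset.mem_univ, true_and]
    have : orderOf a ∣ p := by
      rw [← hox]; exact orderOf_dvd_of_mem_zpowers ha
    exact orderOf_dvd_iff_pow_eq_one.mp this
  have hcardz : (zpowers x' : Set C).toFinset.card = p := by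
    rw [Set.toFinset_card, ← Nat.card_eq_fintype_card, SetLike.coe_sort_coe, Nat.card_zpowers, hox]
  have heq := Finset.eq_of_subset_of_card_le hsub (by rw [hcardz]; exact hcard)
  have hy'mem : y' ∈ zpowers x' := by
    have : y' ∈ Finset.filter (fun a : C => a ^ p = 1) Finset.univ := by
      simp only [Finset.mem_filter, Finset.mem_univ, true_and]
      rw [← hoy]; exact pow_orderOf_eq_one y'
    rw [← heq, Set.mem_toFinset] at this
    exact this
  obtain ⟨k, hk⟩ := hy'mem
  have : x ^ k = y := by
    have := congrArg (Subtype.val) hk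
    simpa using this
  rw [zpowers_le]
  exact ⟨k, this⟩

/-- Every subgroup of prime order `p` is generated by an element of order `p`. -/
lemma exists_generator_of_card_prime {G : Type*} [Group G] [Finite G] {p : ℕ} (hp : p.Prime)
    {H : Subgroup G} (hH : Nat.card H = p) :
    ∃ x : G, orderOf x = p ∧ zpowers x = H := by
  classical
  have hnt : Nontrivial H := by
    rw [← Finite.one_lt_card_iff_nontrivial, hH]; exact hp.one_lt
  obtain ⟨x, hxH, hx1⟩ := H.nontrivial_iff_exists_ne_one.mp hnt
  have hdvd : orderOf (⟨x, hxH⟩ : H) ∣ p := by rw [← hH]; exact orderOf_dvd_natCard _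
  have hne : orderOf (⟨x, hxH⟩ : H) ≠ 1 := by
    rw [Ne, orderOf_eq_one_iff]
    intro h
    exact hx1 (by simpa using congrArg Subtype.val h)
  have hord : orderOf x = p := by
    rw [← Subgroup.orderOf_mk x hxH]
    exact ((Nat.dvd_prime hp).mp hdvd).resolve_left hne
  refine ⟨x, hord, ?_⟩
  have hle : zpowers x ≤ H := zpowers_le.mpr hxH
  have hcards : Nat.card (zpowers x) = Nat.card H := by
    rw [Nat.card_zpowers, hord, hH]
  exact SetLike.coe_injective <| Set.eq_of_subset_of_ncard_le hle
    (by rw [← Nat.card_coe_set_eq, ← Nat.card_coe_set_eq,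
          SetLike.coe_sort_coe, SetLike.coe_sort_coe, hcards]) (Set.toFinite _)

theorem nu_p_le_cliqueNum
    {G : Type*} [Group G] [Finite G] (hcyc : cyclicizer G = {1})
    (p : ℕ) (hp : p.Prime) (hdvd : p ∣ Nat.card G)
    (n : ℕ) (hω : hasCliqueNum (noncyclicGraph G) n) :
    Nat.card {H : Subgroup G // Nat.card H = p} ≤ n := by
  classical
  haveI : Fintype {H : Subgroup G // Nat.card H = p} := Fintype.ofFinite _
  -- choose a generator for each subgroup of order p
  have hgen : ∀ H : {H : Subgroup G // Nat.card H = p},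
      ∃ x : G, orderOf x = p ∧ zpowers x = H.1 :=
    fun H => exists_generator_of_card_prime hp H.2
  choose g hgord hgzp using hgen
  have hgnotcyc : ∀ H, g H ∉ cyclicizer G := by
    intro H hmem
    rw [hcyc, Set.mem_singleton_iff] at hmem
    have := hgord H
    rw [hmem, orderOf_one] at this
    exact hp.one_lt.ne this
  set f : {H : Subgroup G // Nat.card H = p} → {g : G // g ∉ cyclicizer G} :=
    fun H => ⟨g H, hgnotcyc H⟩ with hf
  have hinj : Function.Injective f := by
    intro H K hHK
    have : g H = g K := congrArg Subtype.val hHK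
    apply Subtype.ext
    rw [← hgzp H, ← hgzp K, this]
  set s : Finset {g : G // g ∉ cyclicizer G} := Finset.univ.image f with hs
  have hclique : (noncyclicGraph G).IsClique (s : Set _) := by
    intro a ha b hb hab
    simp only [hs, Finset.coe_image, Finset.coe_univ, Set.image_univ, Set.mem_range] at ha hb
    obtain ⟨H, rfl⟩ := ha
    obtain ⟨K, rfl⟩ := hb
    refine ⟨hab, fun hcc => hab ?_⟩
    have h1 : zpowers (g K) ≤ zpowers (g H) :=
      key_zpowers_le hp (hgord H) (hgord K) hcc
    have h2 : zpowers (g H) ≤ zpowers (g K) :=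
      key_zpowers_le hp (hgord K) (hgord H) (by rwa [Set.pair_comm])
    have : H = K := by
      apply Subtype.ext
      rw [← hgzp H, ← hgzp K]
      exact le_antisymm h2 h1
    rw [this]
  have hcard := hω.2 s hclique
  rwa [hs, Finset.card_image_of_injective _ hinj, Finset.card_univ,
    ← Nat.card_eq_fintype_card] at hcard
end

section
/- Let G be a finite group with Cyc(G) = 1 whose non-cyclic graph has clique number n, and let p be a prime with p^{k-1} < n ≤ p^k. Then for every p-element x of G, x^{p^{k-1}} lies in the center Z(G). -/
lemma aux_commute {G : Type*} [Group G] {u v : G}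
    (h : IsCyclic (Subgroup.closure ({u, v} : Set G))) : Commute u v := by
  have hu : u ∈ Subgroup.closure ({u, v} : Set G) := Subgroup.subset_closure (by simp)
  have hv : v ∈ Subgroup.closure ({u, v} : Set G) := Subgroup.subset_closure (by simp)
  haveI := h
  letI : CommGroup (Subgroup.closure ({u, v} : Set G)) := IsCyclic.commGroup
  have h2 := mul_comm (⟨u, hu⟩ : Subgroup.closure ({u, v} : Set G)) ⟨v, hv⟩
  have h3 := congrArg Subtype.val h2
  exact (by simpa using h3 : u * v = v * u)

theorem pPow_mem_center_of_cliqueNum_between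
    {G : Type*} [Group G] [Finite G] (hcyc : cyclicizer G = {1})
    (n : ℕ) (hω : hasCliqueNum (noncyclicGraph G) n)
    (p k : ℕ) (hp : p.Prime) (h1 : p ^ (k - 1) < n) (h2 : n ≤ p ^ k)
    (x : G) (hx : ∃ m, orderOf x = p ^ m) :
    x ^ (p ^ (k - 1)) ∈ Subgroup.center G := by
  classical
  obtain ⟨m, hm⟩ := hx
  have hp1 : 1 < p := hp.one_lt
  by_contra hz
  have hk : 1 ≤ k := by
    rcases Nat.eq_zero_or_pos k with h | h
    · subst h; simp at h1 h2; omega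
    · exact h
  rw [Subgroup.mem_center_iff] at hz
  push_neg at hz
  obtain ⟨y, hy⟩ := hz
  have hzy : ¬ Commute (x ^ p ^ (k-1)) y := fun h => hy h.symm
  have hxy : ¬ Commute x y := fun h => hzy (h.pow_left _)
  -- m ≥ k
  have hmk : k ≤ m := by
    by_contra h
    push_neg at h
    have hdvd : orderOf x ∣ p ^ (k-1) := by rw [hm]; exact pow_dvd_pow p (by omega)
    exact hzy ((orderOf_dvd_iff_pow_eq_one.mp hdvd) ▸ Commute.one_left y)
  -- key: no small power of x commutes with y
  have hcom : ∀ d : ℕ, 0 < d → d < p ^ k → ¬ Commute (x ^ d) y := by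
    intro d hd1 hd2 hc
    set g : ℕ := Nat.gcd d (p ^ m) with hg
    obtain ⟨v, hvm, hgv⟩ := (Nat.dvd_prime_pow hp).mp (Nat.gcd_dvd_right d (p ^ m))
    have hvd : p ^ v ∣ d := hgv ▸ Nat.gcd_dvd_left d (p ^ m)
    have hvk : v ≤ k - 1 := by
      by_contra hv
      push_neg at hv
      have : p ^ k ∣ d := dvd_trans (pow_dvd_pow p (by omega)) hvd
      exact absurd (Nat.le_of_dvd hd1 this) (by omega)
    have hgdvd : g ∣ p ^ (k-1) := by rw [hg, hgv]; exact pow_dvd_pow p hvk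
    obtain ⟨w, hw⟩ := hgdvd
    -- Bezout
    have hbez := Nat.gcd_eq_gcd_ab d (p ^ m)
    set a := Nat.gcdA d (p ^ m)
    set b := Nat.gcdB d (p ^ m)
    have hxg : x ^ (g : ℤ) = (x ^ (d : ℤ)) ^ a := by
      rw [hbez, zpow_add, zpow_mul, zpow_mul]
      have : x ^ (((p ^ m : ℕ)) : ℤ) = 1 := by
        rw [zpow_natCast, ← hm, pow_orderOf_eq_one]
      rw [this, one_zpow, mul_one]
    have hzeq : x ^ p ^ (k-1) = ((x ^ (d : ℤ)) ^ a) ^ (w : ℤ) := by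
      rw [← hxg, ← zpow_mul, show (g : ℤ) * w = ((g * w : ℕ) : ℤ) by push_cast; ring,
        zpow_natCast, ← hw]
    have hcz : Commute (x ^ (d : ℤ)) y := by rw [zpow_natCast]; exact hc
    exact hzy (hzeq ▸ ((hcz.zpow_left a).zpow_left (w : ℤ)))
  -- membership helpers
  have hmem : ∀ g : G, g ≠ 1 → g ∉ cyclicizer G := by
    intro g hg; rw [hcyc]; simpa using hg
  have hxpow : ∀ j : ℕ, Commute x (x ^ j) := fun j => (Commute.refl x).pow_right j
  have hne1 : x ≠ 1 := fun h => hxy (h ▸ Commute.one_left y)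
  have hfne1 : ∀ j : ℕ, x ^ j * y ≠ 1 := by
    intro j h
    have hy' : y = (x ^ j)⁻¹ := (inv_eq_of_mul_eq_one_right h).symm
    exact hxy (hy' ▸ (hxpow j).inv_right)
  set V := {g : G // g ∉ cyclicizer G}
  let vx : V := ⟨x, hmem x hne1⟩
  let f : ℕ → V := fun j => ⟨x ^ j * y, hmem _ (hfne1 j)⟩
  -- x doesn't commute with x^j*y
  have hA : ∀ j : ℕ, ¬ Commute x (x ^ j * y) := by
    intro j h
    have h2 := ((hxpow j).inv_right).mul_right h
    rw [inv_mul_cancel_left] at h2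
    exact hxy h2
  -- the x^i*y pairwise don't commute
  have hB : ∀ i j : ℕ, i < j → j < p ^ k → ¬ Commute (x ^ i * y) (x ^ j * y) := by
    intro i j hij hjk h
    have hsplit : x ^ j * y = x ^ (j - i) * (x ^ i * y) := by
      rw [← mul_assoc, ← pow_add]; congr 2; omega
    rw [hsplit] at h
    have h2 : Commute (x ^ i * y) (x ^ (j - i)) := by
      have h3 := h.mul_right (Commute.refl (x ^ i * y)).inv_right
      rwa [mul_inv_cancel_right] at h3
    have h4 : Commute (x ^ (j - i)) y := by
      have h5 := (((Commute.refl x).pow_pow i (j-i)).symm.inv_right).mul_right h2.symm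
      rwa [inv_mul_cancel_left] at h5
    exact hcom (j - i) (by omega) (by omega) h4
  -- distinctness
  have hinj : ∀ i j : ℕ, i < p ^ k → j < p ^ k → x ^ i * y = x ^ j * y → i = j := by
    intro i j hi hj h
    have h2 : x ^ i = x ^ j := by
      have := mul_right_cancel h; exact this
    by_contra hne
    wlog hij : i < j generalizing i j
    · exact this j i hj hi h.symm h2.symm (Ne.symm hne) (by omega)
    have h3 : x ^ (j - i) = 1 := by
      have : x ^ i * x ^ (j - i) = x ^ i * 1 := by
        rw [← pow_add, mul_one, show i + (j - i) = j by omega, ← h2]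
      exact mul_left_cancel this
    have h4 : p ^ m ∣ j - i := hm ▸ orderOf_dvd_iff_pow_eq_one.mpr h3
    have h5 : p ^ k ≤ j - i := le_trans (Nat.pow_le_pow_right (by omega) hmk)
      (Nat.le_of_dvd (by omega) h4)
    omega
  have hxf : ∀ j : ℕ, (x : G) ≠ x ^ j * y := by
    intro j h
    have hy' : y = (x ^ j)⁻¹ * x := eq_inv_mul_of_mul_eq h.symm
    exact hxy (hy' ▸ ((hxpow j).inv_right.mul_right (Commute.refl x)))
  -- build the clique
  let s : Finset V := insert vx ((Finset.range (p ^ k)).image f)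
  have hadj : ∀ u v : V, ¬ Commute (u : G) (v : G) → (noncyclicGraph G).Adj u v := by
    intro u v h
    refine (⟨fun he => h (he ▸ Commute.refl _), fun hc => h (aux_commute hc)⟩ :
      u ≠ v ∧ ¬ IsCyclic (Subgroup.closure {(u : G), (v : G)} : Subgroup G))
  have hclique : (noncyclicGraph G).IsClique (s : Set V) := by
    intro u hu v hv huv
    simp only [s, Finset.coe_insert, Set.mem_insert_iff, Finset.coe_image,
      Set.mem_image, Finset.mem_coe, Finset.mem_range] at hu hv
    rcases hu with rfl | ⟨i, hi, rfl⟩ <;> rcases hv with rfl | ⟨j, hj, rfl⟩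
    · exact absurd rfl huv
    · exact hadj _ _ (hA j)
    · exact hadj _ _ (fun h => hA i h.symm)
    · rcases Nat.lt_or_ge i j with hij | hij
      · exact hadj _ _ (hB i j hij hj)
      · have hij' : j < i := by
          rcases Nat.lt_or_ge j i with h' | h'
          · exact h'
          · exact absurd (congrArg f (by omega : i = j)) (by simpa using huv)
        exact hadj _ _ (fun h => hB j i hij' hi h.symm)
  have hcard : s.card = p ^ k + 1 := by
    have hinjOn : Set.InjOn f (Finset.range (p ^ k)) := by
      intro i hi j hj h
      simp only [Finset.coe_range, Set.mem_Iio] at hi hj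
      exact hinj i j hi hj (congrArg Subtype.val h)
    have hnot : vx ∉ (Finset.range (p ^ k)).image f := by
      simp only [Finset.mem_image, Finset.mem_range, not_exists]
      rintro j ⟨hj, hf⟩
      exact hxf j (congrArg Subtype.val hf).symm
    rw [show s = insert vx ((Finset.range (p ^ k)).image f) from rfl,
      Finset.card_insert_of_notMem hnot, Finset.card_image_of_injOn hinjOn,
      Finset.card_range]
  have := hω.2 s hclique
  omega
end

section
/- Let G be a finite group with Cyc(G) = 1 and suppose the clique number of the non-cyclic graph of G is at most p for some prime p. Then G has no non-trivial p-element; i.e., p does not divide |G|. -/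
section Aux

open Subgroup

lemma aux_zpowers_cyclic {G : Type*} [Group G] (a : G) : IsCyclic (zpowers a) := by
  refine ⟨⟨⟨a, mem_zpowers a⟩, fun x => ?_⟩⟩
  obtain ⟨k, hk⟩ := x.2
  exact ⟨k, Subtype.ext (by simpa using hk)⟩

lemma aux_isCyclic_of_le {G : Type*} [Group G] {H K : Subgroup G} (h : H ≤ K)
    (hK : IsCyclic K) : IsCyclic H :=
  isCyclic_of_surjective (subgroupOfEquivOfLe h) (subgroupOfEquivOfLe h).surjective

/-- If `0 < d < p = orderOf z`, then `z ∈ zpowers (z ^ d)`. -/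
lemma aux_mem_zpowers_pow {G : Type*} [Group G] {p : ℕ} (hp : p.Prime) {z : G}
    (hz : orderOf z = p) {d : ℕ} (hd0 : 0 < d) (hdp : d < p) :
    z ∈ zpowers (z ^ d) := by
  haveI : Fact p.Prime := ⟨hp⟩
  have hdz : (d : ZMod p) ≠ 0 := by
    have : ¬ (p ∣ d) := Nat.not_dvd_of_pos_of_lt hd0 hdp
    simpa [ZMod.natCast_eq_zero_iff] using this
  set k : ℕ := ((d : ZMod p)⁻¹).val with hk
  have hmul : (d * k : ℕ) ≡ 1 [MOD p] := by
    rw [← ZMod.natCast_eq_natCast_iff]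
    push_cast
    rw [hk, ZMod.natCast_val, ZMod.cast_id]
    exact mul_inv_cancel₀ hdz
  have : z ^ (d * k) = z := by
    rw [← pow_mod_orderOf, hz]
    have : (d * k) % p = 1 % p := hmul
    rw [this, Nat.one_mod_eq_one.mpr hp.one_lt.ne', pow_one]
  refine ⟨(k : ℤ), ?_⟩
  show (z ^ d) ^ (k : ℤ) = z
  rw [← zpow_natCast z d, ← zpow_mul, ← Nat.cast_mul, zpow_natCast, this]

lemma aux_key {G : Type*} [Group G] {p : ℕ} (hp : p.Prime) {z y : G}
    (hz : orderOf z = p) (hxy : ¬ IsCyclic (closure {z, y} : Subgroup G))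
    {i j : ℕ} (hij : j < i) (hi : i < p) :
    closure {z, y} ≤ closure {z ^ i * y, z ^ j * y} := by
  set K := closure ({z ^ i * y, z ^ j * y} : Set G)
  have h1 : z ^ i * y ∈ K := subset_closure (by simp)
  have h2 : z ^ j * y ∈ K := subset_closure (by simp [K])
  have hd : z ^ (i - j) ∈ K := by
    have e1 : z ^ (i - j) = z ^ i * (z ^ j)⁻¹ := by
      rw [eq_mul_inv_iff_mul_eq, ← pow_add]
      congr 1
      omega
    have e2 : z ^ (i - j) = (z ^ i * y) * (z ^ j * y)⁻¹ := by rw [e1]; group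
    rw [e2]
    exact mul_mem h1 (inv_mem h2)
  have hzK : z ∈ K := by
    have := aux_mem_zpowers_pow hp hz (d := i - j) (by omega) (by omega)
    obtain ⟨m, hm⟩ := this
    rw [← hm]
    exact zpow_mem hd m
  have hyK : y ∈ K := by
    have : y = (z ^ i)⁻¹ * (z ^ i * y) := by group
    rw [this]
    exact mul_mem (inv_mem (pow_mem hzK i)) h1
  rw [closure_le]
  rintro w (rfl | rfl)
  · exact hzK
  · exact hyK

lemma aux_false {G : Type*} [Group G] [Finite G] (hcyc : cyclicizer G = {1})
    {n p : ℕ} (hω : hasCliqueNum (noncyclicGraph G) n) (hp : p.Prime) (hn : n ≤ p)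
    {z : G} (hz : orderOf z = p) : False := by
  classical
  have hz1 : z ≠ 1 := by
    intro h
    rw [h, orderOf_one] at hz
    exact hp.one_lt.ne' hz.symm
  have hy : ∃ y : G, ¬ IsCyclic (closure ({z, y} : Set G) : Subgroup G) := by
    by_contra h
    push_neg at h
    have : z ∈ cyclicizer G := h
    rw [hcyc] at this
    exact hz1 this
  obtain ⟨y, hy⟩ := hy
  have hcyc_of_mem : ∀ w : G, w ∈ zpowers z → IsCyclic (closure ({z, w} : Set G) : Subgroup G) := by
    intro w hw
    apply aux_isCyclic_of_le _ (aux_zpowers_cyclic z)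
    rw [closure_le, Set.insert_subset_iff, Set.singleton_subset_iff]
    exact ⟨mem_zpowers z, hw⟩
  have hynotz : y ∉ zpowers z := fun h => hy (hcyc_of_mem y h)
  have hmem : ∀ g : G, g ≠ 1 → g ∉ cyclicizer G := by
    intro g hg
    rw [hcyc]
    simpa using hg
  have hne1 : ∀ i : ℕ, z ^ i * y ≠ 1 := by
    intro i h
    apply hynotz
    rw [eq_inv_of_mul_eq_one_right h]
    exact inv_mem (pow_mem (mem_zpowers z) i)
  have key2 : ∀ i : ℕ, ¬ IsCyclic (closure ({z, z ^ i * y} : Set G) : Subgroup G) := by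
    intro i hc
    apply hy
    apply aux_isCyclic_of_le _ hc
    rw [closure_le, Set.insert_subset_iff, Set.singleton_subset_iff]
    have hz' : z ∈ closure ({z, z ^ i * y} : Set G) := subset_closure (by simp)
    have hy' : (z ^ i * y) ∈ closure ({z, z ^ i * y} : Set G) := subset_closure (by simp)
    refine ⟨hz', ?_⟩
    have := mul_mem (inv_mem (pow_mem hz' i)) hy'
    simpa using this
  have key1 : ∀ i j : ℕ, i < p → j < p → i ≠ j →
      ¬ IsCyclic (closure ({z ^ i * y, z ^ j * y} : Set G) : Subgroup G) := by
    intro i j hi hj hij hc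
    rcases hij.lt_or_gt with h | h
    · rw [Set.pair_comm] at hc
      exact hy (aux_isCyclic_of_le (aux_key hp hz hy h hj) hc)
    · exact hy (aux_isCyclic_of_le (aux_key hp hz hy h hi) hc)
  let f : Fin (p + 1) → {g : G // g ∉ cyclicizer G} := fun i =>
    if h : (i : ℕ) = p then ⟨z, hmem z hz1⟩ else ⟨z ^ (i : ℕ) * y, hmem _ (hne1 i)⟩
  have hfval : ∀ (i : Fin (p+1)) (h : (i:ℕ) ≠ p), (f i : G) = z ^ (i:ℕ) * y := by
    intro i h
    simp only [f, dif_neg h]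
  have hfvalp : ∀ (i : Fin (p+1)) (h : (i:ℕ) = p), (f i : G) = z := by
    intro i h
    simp only [f, dif_pos h]
  have hzney : ∀ i : ℕ, z ≠ z ^ i * y := by
    intro i h
    apply hynotz
    have e : (z ^ i)⁻¹ * (z ^ i * y) ∈ zpowers z := by
      rw [← h]
      exact mul_mem (inv_mem (pow_mem (mem_zpowers z) i)) (mem_zpowers z)
    simpa using e
  have hpowinj : ∀ i j : ℕ, i < p → j < p → z ^ i * y = z ^ j * y → i = j := by
    intro i j hi hj h
    have : z ^ i = z ^ j := by
      have := mul_right_cancel h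
      exact this
    exact pow_injOn_Iio_orderOf (by simpa [hz] using hi) (by simpa [hz] using hj) this
  have hinj : Function.Injective f := by
    intro a b hab
    have hab' : (f a : G) = (f b : G) := congrArg Subtype.val hab
    by_cases ha : (a : ℕ) = p <;> by_cases hb : (b : ℕ) = p
    · exact Fin.ext (by omega)
    · rw [hfvalp a ha, hfval b hb] at hab'
      exact absurd hab' (hzney _)
    · rw [hfval a ha, hfvalp b hb] at hab'
      exact absurd hab'.symm (hzney _)
    · rw [hfval a ha, hfval b hb] at hab'
      exact Fin.ext (hpowinj _ _ (by omega) (by omega) hab')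
  have hclq : (noncyclicGraph G).IsClique (↑(Finset.univ.image f)) := by
    intro a ha b hb hab
    simp only [Finset.coe_image, Finset.coe_univ, Set.image_univ, Set.mem_range] at ha hb
    obtain ⟨i, rfl⟩ := ha
    obtain ⟨j, rfl⟩ := hb
    refine ⟨hab, ?_⟩
    by_cases hi : (i : ℕ) = p <;> by_cases hj : (j : ℕ) = p
    · exact absurd (congrArg f (Fin.ext (by omega) : i = j)) hab
    · rw [hfvalp i hi, hfval j hj]
      exact key2 j
    · rw [hfval i hi, hfvalp j hj, Set.pair_comm]
      exact key2 i
    · rw [hfval i hi, hfval j hj]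
      refine key1 _ _ (by omega) (by omega) ?_
      intro h
      exact hab (congrArg f (Fin.ext (by omega)))
  have hcard := hω.2 (Finset.univ.image f) hclq
  rw [Finset.card_image_of_injective _ hinj, Finset.card_univ, Fintype.card_fin] at hcard
  omega

end Aux

theorem no_pElement_of_cliqueNum_le_p
    {G : Type*} [Group G] [Finite G] (hcyc : cyclicizer G = {1})
    (n : ℕ) (hω : hasCliqueNum (noncyclicGraph G) n)
    (p : ℕ) (hp : p.Prime) (hn : n ≤ p) :
    (∀ x : G, (∃ m, orderOf x = p ^ m) → x = 1) ∧ ¬ p ∣ Nat.card G := by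
  have part1 : ∀ x : G, (∃ m, orderOf x = p ^ m) → x = 1 := by
    rintro x ⟨m, hm⟩
    by_contra hx1
    have hm0 : m ≠ 0 := by
      rintro rfl
      rw [pow_zero] at hm
      exact hx1 (orderOf_eq_one_iff.mp hm)
    have hzord : orderOf (x ^ (p ^ (m - 1))) = p := by
      rw [orderOf_pow, hm, Nat.gcd_eq_right (pow_dvd_pow p (by omega)),
        Nat.pow_div (by omega) hp.pos]
      have : m - (m - 1) = 1 := by omega
      rw [this, pow_one]
    exact aux_false hcyc hω hp hn hzord
  refine ⟨part1, ?_⟩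
  intro hdvd
  haveI := Fintype.ofFinite G
  rw [Nat.card_eq_fintype_card] at hdvd
  haveI : Fact p.Prime := ⟨hp⟩
  obtain ⟨x, hx⟩ := exists_prime_orderOf_dvd_card p hdvd
  have h1 := part1 x ⟨1, by simpa using hx⟩
  rw [h1, orderOf_one] at hx
  exact hp.one_lt.ne hx
end

section
/- Let G be a non-locally-cyclic group. Then the clique number of the non-cyclic graph of G equals 3 if and only if G/Cyc(G) ≅ Z_2 ⊕ Z_2. -/
section AuxLemmas

variable {G : Type*} [Group G]

lemma NCG.mpl (a b : G) : a ∈ Subgroup.closure ({a, b} : Set G) :=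
  Subgroup.subset_closure (Set.mem_insert _ _)

lemma NCG.mpr (a b : G) : b ∈ Subgroup.closure ({a, b} : Set G) :=
  Subgroup.subset_closure (Set.mem_insert_of_mem _ rfl)

open NCG

lemma NCG.closure_pair_eq_of_mem {a b c d : G}
    (h1 : a ∈ Subgroup.closure ({c, d} : Set G)) (h2 : b ∈ Subgroup.closure ({c, d} : Set G))
    (h3 : c ∈ Subgroup.closure ({a, b} : Set G)) (h4 : d ∈ Subgroup.closure ({a, b} : Set G)) :
    Subgroup.closure ({a, b} : Set G) = Subgroup.closure ({c, d} : Set G) := by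
  apply le_antisymm <;> rw [Subgroup.closure_le] <;> intro x hx <;>
    rcases hx with rfl | hx <;> try assumption
  · rwa [Set.mem_singleton_iff.mp hx]
  · rwa [Set.mem_singleton_iff.mp hx]

lemma NCG.isCyclic_zpowers (g : G) : IsCyclic (Subgroup.zpowers g) := by
  refine ⟨⟨g, Subgroup.mem_zpowers g⟩, fun x => ?_⟩
  obtain ⟨n, hn⟩ := Subgroup.mem_zpowers_iff.mp x.2
  exact Subgroup.mem_zpowers_iff.mpr ⟨n, Subtype.ext (by simpa using hn)⟩

lemma NCG.exists_zpowers {H : Subgroup G} (h : IsCyclic H) :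
    ∃ g, g ∈ H ∧ H = Subgroup.zpowers g := by
  obtain ⟨⟨g, hg⟩, hgen⟩ := h
  refine ⟨g, hg, le_antisymm (fun x hx => ?_) ((Subgroup.zpowers_le).mpr hg)⟩
  obtain ⟨n, hn⟩ := Subgroup.mem_zpowers_iff.mp (hgen ⟨x, hx⟩)
  exact Subgroup.mem_zpowers_iff.mpr ⟨n, by simpa using congrArg Subtype.val hn⟩

lemma NCG.cyclic_of_mem_zpowers {a b : G} (hb : b ∈ Subgroup.zpowers a) :
    IsCyclic (Subgroup.closure ({a, b} : Set G)) := by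
  have hle : Subgroup.closure ({a, b} : Set G) ≤ Subgroup.zpowers a := by
    rw [Subgroup.closure_le]
    intro x hx
    rcases hx with rfl | hx
    · exact Subgroup.mem_zpowers _
    · rwa [Set.mem_singleton_iff.mp hx]
  haveI := NCG.isCyclic_zpowers a
  exact Subgroup.isCyclic_of_le hle

lemma NCG.ne_of_nc {a b : G} (h : ¬ IsCyclic (Subgroup.closure ({a, b} : Set G))) : a ≠ b := by
  rintro rfl
  exact h (NCG.cyclic_of_mem_zpowers (Subgroup.mem_zpowers a))

lemma NCG.closure_pair_mul_left (a b : G) :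
    Subgroup.closure ({a, a * b} : Set G) = Subgroup.closure ({a, b} : Set G) :=
  NCG.closure_pair_eq_of_mem (mpl a b) (mul_mem (mpl a b) (mpr a b)) (mpl _ _)
    (by simpa using mul_mem (inv_mem (mpl a (a*b))) (mpr a (a*b)))

lemma NCG.closure_pair_mul_right (a b : G) :
    Subgroup.closure ({b, a * b} : Set G) = Subgroup.closure ({a, b} : Set G) :=
  NCG.closure_pair_eq_of_mem (mpr a b) (mul_mem (mpl a b) (mpr a b))
    (by simpa using mul_mem (mpr b (a*b)) (inv_mem (mpl b (a*b))))
    (mpl _ _)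

lemma NCG.closure_pair_mul_mul (a b : G) :
    Subgroup.closure ({a, a * (a * b)} : Set G) = Subgroup.closure ({a, b} : Set G) :=
  NCG.closure_pair_eq_of_mem (mpl a b) (mul_mem (mpl a b) (mul_mem (mpl a b) (mpr a b))) (mpl _ _)
    (by simpa [mul_assoc] using mul_mem (inv_mem (mpl a (a*(a*b))))
          (mul_mem (inv_mem (mpl a (a*(a*b)))) (mpr a (a*(a*b)))))

lemma NCG.not_cyc_left {a b : G} (h : ¬ IsCyclic (Subgroup.closure ({a, b} : Set G))) :
    a ∉ cyclicizer G := fun ha => h (ha b)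

lemma NCG.not_cyc_right {a b : G} (h : ¬ IsCyclic (Subgroup.closure ({a, b} : Set G))) :
    b ∉ cyclicizer G := fun hb => h (by rw [Set.pair_comm]; exact hb a)

lemma NCG.cyclic_of_rel {a b : G} (hc : a⁻¹ * b ∈ cyclicizer G) :
    IsCyclic (Subgroup.closure ({a, b} : Set G)) := by
  have h1 := hc a
  rw [Set.pair_comm] at h1
  have he : Subgroup.closure ({a, b} : Set G) = Subgroup.closure ({a, a⁻¹ * b} : Set G) :=
    NCG.closure_pair_eq_of_mem (mpl _ _)
      (by simpa using mul_mem (mpl a (a⁻¹*b)) (mpr a (a⁻¹*b)))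
      (mpl _ _) (mul_mem (inv_mem (mpl a b)) (mpr a b))
  rw [he]; exact h1

lemma NCG.exists_noncyclic_pair (h : ¬ IsLocallyCyclic G) :
    ∃ a b : G, ¬ IsCyclic (Subgroup.closure ({a, b} : Set G)) := by
  by_contra hc
  push_neg at hc
  apply h
  intro H hH
  obtain ⟨S, hS⟩ := hH
  suffices h' : ∀ S : Finset G, ∃ g : G, Subgroup.closure (S : Set G) = Subgroup.zpowers g by
    obtain ⟨g, hg⟩ := h' S
    rw [← hS, hg]
    exact NCG.isCyclic_zpowers g
  intro S
  classical
  induction S using Finset.induction_on with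
  | empty => exact ⟨1, by simp⟩
  | @insert a S ha ih =>
    obtain ⟨g, hg⟩ := ih
    obtain ⟨c, hc', hgen⟩ := NCG.exists_zpowers (hc a g)
    refine ⟨c, le_antisymm ?_ ?_⟩
    · rw [Finset.coe_insert, Subgroup.closure_le]
      intro x hx
      rcases Set.mem_insert_iff.mp hx with rfl | hx
      · rw [← hgen]; exact mpl _ _
      · have hx2 : x ∈ Subgroup.closure (S : Set G) := Subgroup.subset_closure hx
        rw [hg] at hx2
        obtain ⟨n, hn⟩ := Subgroup.mem_zpowers_iff.mp hx2
        rw [← hn, ← hgen]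
        exact zpow_mem (mpr _ _) n
    · rw [← hgen, Subgroup.closure_le]
      intro x hx
      rcases Set.mem_insert_iff.mp hx with rfl | hx
      · exact Subgroup.subset_closure (by simp)
      · rw [Set.mem_singleton_iff.mp hx]
        have : g ∈ Subgroup.closure (S : Set G) := by rw [hg]; exact Subgroup.mem_zpowers g
        exact Subgroup.closure_mono (by simp) this

lemma NCG.exists_four_clique {V : Type*} (Γ : SimpleGraph V) {a b c d : V}
    (hab : Γ.Adj a b) (hac : Γ.Adj a c) (had : Γ.Adj a d)
    (hbc : Γ.Adj b c) (hbd : Γ.Adj b d) (hcd : Γ.Adj c d) :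
    ∃ s : Finset V, Γ.IsClique (s : Set V) ∧ s.card = 4 := by
  classical
  refine ⟨{a, b, c, d}, ?_, ?_⟩
  · intro x hx y hy hxy
    simp only [Finset.coe_insert, Set.mem_insert_iff, Finset.coe_singleton,
      Set.mem_singleton_iff] at hx hy
    rcases hx with rfl | rfl | rfl | rfl <;> rcases hy with rfl | rfl | rfl | rfl <;>
      first
        | exact absurd rfl hxy
        | exact hab | exact hab.symm | exact hac | exact hac.symm
        | exact had | exact had.symm | exact hbc | exact hbc.symm
        | exact hbd | exact hbd.symm | exact hcd | exact hcd.symm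
  · rw [Finset.card_insert_of_notMem (by simp [hab.ne, hac.ne, had.ne]),
      Finset.card_insert_of_notMem (by simp [hbc.ne, hbd.ne]),
      Finset.card_insert_of_notMem (by simp [hcd.ne]), Finset.card_singleton]

lemma NCG.mk_adj {x y : G} (px : x ∉ cyclicizer G) (py : y ∉ cyclicizer G)
    (hnc : ¬ IsCyclic (Subgroup.closure ({x, y} : Set G))) :
    (noncyclicGraph G).Adj ⟨x, px⟩ ⟨y, py⟩ :=
  ⟨fun hxy => (NCG.ne_of_nc hnc) (congrArg Subtype.val hxy), hnc⟩

lemma NCG.sq_cyclic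
    (hb : ∀ s : Finset {g : G // g ∉ cyclicizer G},
      (noncyclicGraph G).IsClique (s : Set _) → s.card ≤ 3)
    (a g : G) : IsCyclic (Subgroup.closure ({a * a, g} : Set G)) := by
  by_cases hag : IsCyclic (Subgroup.closure ({a, g} : Set G))
  · haveI := hag
    refine Subgroup.isCyclic_of_le (H' := Subgroup.closure ({a, g} : Set G)) ?_
    rw [Subgroup.closure_le]
    intro x hx
    rcases Set.mem_insert_iff.mp hx with rfl | hx
    · exact mul_mem (mpl a g) (mpl a g)
    · rw [Set.mem_singleton_iff.mp hx]; exact mpr a g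
  · have key : IsCyclic (Subgroup.closure ({a * (a * g), g} : Set G)) := by
      by_contra hnc
      have nc1 : ¬ IsCyclic (Subgroup.closure ({a, a * g} : Set G)) := by
        rw [NCG.closure_pair_mul_left]; exact hag
      have nc2 : ¬ IsCyclic (Subgroup.closure ({a, a * (a * g)} : Set G)) := by
        rw [NCG.closure_pair_mul_mul]; exact hag
      have nc4 : ¬ IsCyclic (Subgroup.closure ({a * g, a * (a * g)} : Set G)) := by
        rw [NCG.closure_pair_mul_right, NCG.closure_pair_mul_left]; exact hag
      have nc5 : ¬ IsCyclic (Subgroup.closure ({a * g, g} : Set G)) := by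
        rw [show ({a * g, g} : Set G) = {g, a * g} from Set.pair_comm _ _,
          NCG.closure_pair_mul_right]
        exact hag
      have pa : a ∉ cyclicizer G := NCG.not_cyc_left hag
      have pg : g ∉ cyclicizer G := NCG.not_cyc_right hag
      have pu : a * g ∉ cyclicizer G := NCG.not_cyc_left nc5
      have pau : a * (a * g) ∉ cyclicizer G := NCG.not_cyc_left hnc
      obtain ⟨s, hs, hcard⟩ := NCG.exists_four_clique (noncyclicGraph G)
        (NCG.mk_adj pa pu nc1) (NCG.mk_adj pa pau nc2) (NCG.mk_adj pa pg hag)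
        (NCG.mk_adj pu pau nc4) (NCG.mk_adj pu pg nc5) (NCG.mk_adj pau pg hnc)
      have := hb s hs
      omega
    haveI := key
    refine Subgroup.isCyclic_of_le (H' := Subgroup.closure ({a * (a * g), g} : Set G)) ?_
    rw [Subgroup.closure_le]
    intro x hx
    rcases Set.mem_insert_iff.mp hx with rfl | hx
    · simpa [mul_assoc] using mul_mem (mpl (a*(a*g)) g) (inv_mem (mpr (a*(a*g)) g))
    · rw [Set.mem_singleton_iff.mp hx]; exact mpr _ _

lemma NCG.noncyclic_of_cosets {N : Subgroup G} (hsq : ∀ a : G, a * a ∈ N)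
    {a b : G} (ha : a ∉ N) (hb : b ∉ N) (hab : a⁻¹ * b ∉ N) :
    ¬ IsCyclic (Subgroup.closure ({a, b} : Set G)) := by
  intro hcyc
  obtain ⟨c, hc, hgen⟩ := NCG.exists_zpowers hcyc
  obtain ⟨m, hm⟩ := Subgroup.mem_zpowers_iff.mp (hgen ▸ mpl a b)
  obtain ⟨n, hn⟩ := Subgroup.mem_zpowers_iff.mp (hgen ▸ mpr a b)
  have hc2 : c ^ (2 : ℤ) ∈ N := by
    rw [show (2 : ℤ) = 1 + 1 by norm_num, zpow_add, zpow_one]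
    exact hsq c
  have even_mem : ∀ k : ℤ, Even k → c ^ k ∈ N := by
    rintro k ⟨t, rfl⟩
    have h2 : c ^ (t + t) = (c ^ (2 : ℤ)) ^ t := by rw [← zpow_mul]; congr 1; ring
    rw [h2]
    exact Subgroup.zpow_mem N hc2 t
  have hmodd : ¬ Even m := fun he => ha (by rw [← hm]; exact even_mem m he)
  have hnodd : ¬ Even n := fun he => hb (by rw [← hn]; exact even_mem n he)
  have hkey : a⁻¹ * b = c ^ (n - m) := by
    rw [← hm, ← hn, ← zpow_neg, ← zpow_add]
    congr 1; ring
  apply hab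
  rw [hkey]
  exact even_mem _ (Int.even_sub.mpr (iff_of_false hnodd hmodd))

end AuxLemmas

instance : IsKleinFour (Multiplicative (ZMod 2) × Multiplicative (ZMod 2)) where
  card_four := by simp
  exponent_two := by simp [Monoid.exponent_prod]

open NCG in
theorem cliqueNum_eq_three_iff_quotient_klein
    {G : Type*} [Group G] (h : ¬ IsLocallyCyclic G)
    (N : Subgroup G) [N.Normal] (hN : (N : Set G) = cyclicizer G) :
    hasCliqueNum (noncyclicGraph G) 3 ↔
      Nonempty ((G ⧸ N) ≃* Multiplicative (ZMod 2) × Multiplicative (ZMod 2)) := by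
  classical
  have memN : ∀ {g : G}, g ∈ N ↔ g ∈ cyclicizer G := fun {g} => by
    rw [← SetLike.mem_coe, hN]
  obtain ⟨x, y, hxy⟩ := NCG.exists_noncyclic_pair h
  have ncxy1 : ¬ IsCyclic (Subgroup.closure ({x, x * y} : Set G)) := by
    rw [NCG.closure_pair_mul_left]; exact hxy
  have ncxy2 : ¬ IsCyclic (Subgroup.closure ({y, x * y} : Set G)) := by
    rw [NCG.closure_pair_mul_right]; exact hxy
  have px : x ∉ cyclicizer G := NCG.not_cyc_left hxy
  have py : y ∉ cyclicizer G := NCG.not_cyc_right hxy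
  have pxy : x * y ∉ cyclicizer G := NCG.not_cyc_right ncxy1
  have hxN : x ∉ N := fun hm => px (memN.mp hm)
  have hyN : y ∉ N := fun hm => py (memN.mp hm)
  have hxyN : x * y ∉ N := fun hm => pxy (memN.mp hm)
  constructor
  · rintro ⟨-, hb⟩
    have hsq : ∀ a : G, a * a ∈ N := fun a =>
      memN.mpr (fun g => NCG.sq_cyclic hb a g)
    have cover : ∀ g : G, g ∈ N ∨ x⁻¹ * g ∈ N ∨ y⁻¹ * g ∈ N ∨ (x * y)⁻¹ * g ∈ N := by
      intro g
      by_contra hg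
      push_neg at hg
      obtain ⟨hg1, hg2, hg3, hg4⟩ := hg
      have ncxg := NCG.noncyclic_of_cosets hsq hxN hg1 hg2
      have ncyg := NCG.noncyclic_of_cosets hsq hyN hg1 hg3
      have ncxyg := NCG.noncyclic_of_cosets hsq hxyN hg1 hg4
      have pg : g ∉ cyclicizer G := NCG.not_cyc_right ncxg
      obtain ⟨s, hs, hcard⟩ := NCG.exists_four_clique (noncyclicGraph G)
        (NCG.mk_adj px py hxy) (NCG.mk_adj px pxy ncxy1) (NCG.mk_adj px pg ncxg)
        (NCG.mk_adj py pxy ncxy2) (NCG.mk_adj py pg ncyg) (NCG.mk_adj pxy pg ncxyg)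
      have := hb s hs
      omega
    -- quotient facts
    have mk_sq : ∀ q : G ⧸ N, q * q = 1 := by
      intro q
      refine QuotientGroup.induction_on q (fun a => ?_)
      rw [← QuotientGroup.mk_mul]
      exact (QuotientGroup.eq_one_iff _).mpr (hsq a)
    have e1 : ((x : G ⧸ N)) ≠ 1 := by
      rw [Ne, QuotientGroup.eq_one_iff]; exact hxN
    have e2 : ((y : G ⧸ N)) ≠ 1 := by
      rw [Ne, QuotientGroup.eq_one_iff]; exact hyN
    have e3 : ((x : G ⧸ N)) ≠ (y : G ⧸ N) := by
      rw [Ne, QuotientGroup.eq]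
      exact fun hm => hxy (NCG.cyclic_of_rel (memN.mp hm))
    have e4 : (x : G ⧸ N) * (y : G ⧸ N) ≠ 1 := by
      rw [← QuotientGroup.mk_mul, Ne, QuotientGroup.eq_one_iff]
      exact hxyN
    have e5 : (x : G ⧸ N) * (y : G ⧸ N) ≠ (x : G ⧸ N) := by
      intro heq
      rw [mul_eq_left] at heq
      exact e2 heq
    have e6 : (x : G ⧸ N) * (y : G ⧸ N) ≠ (y : G ⧸ N) := by
      intro heq
      rw [mul_eq_right] at heq
      exact e1 heq
    have huniv : (Set.univ : Set (G ⧸ N)) =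
        {1, (x : G ⧸ N), (y : G ⧸ N), (x : G ⧸ N) * (y : G ⧸ N)} := by
      ext q
      simp only [Set.mem_univ, true_iff, Set.mem_insert_iff, Set.mem_singleton_iff]
      refine QuotientGroup.induction_on q (fun g => ?_)
      rcases cover g with hg | hg | hg | hg
      · exact Or.inl ((QuotientGroup.eq_one_iff _).mpr hg)
      · exact Or.inr (Or.inl ((QuotientGroup.eq.mpr hg).symm))
      · exact Or.inr (Or.inr (Or.inl ((QuotientGroup.eq.mpr hg).symm)))
      · refine Or.inr (Or.inr (Or.inr ?_))
        rw [← QuotientGroup.mk_mul]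
        exact (QuotientGroup.eq.mpr hg).symm
    have hcard : Nat.card (G ⧸ N) = 4 := by
      have h1 : Nat.card (G ⧸ N) = (Set.univ : Set (G ⧸ N)).ncard :=
        (Set.ncard_univ _).symm
      have p1 : (1 : G ⧸ N) ∉ ({(x : G ⧸ N), (y : G ⧸ N), (x : G ⧸ N) * (y : G ⧸ N)} :
          Set (G ⧸ N)) := by
        simp only [Set.mem_insert_iff, Set.mem_singleton_iff, not_or]
        exact ⟨fun h' => e1 h'.symm, fun h' => e2 h'.symm, fun h' => e4 h'.symm⟩
      have p2 : ((x : G) : G ⧸ N) ∉ ({(y : G ⧸ N), (x : G ⧸ N) * (y : G ⧸ N)} :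
          Set (G ⧸ N)) := by
        simp only [Set.mem_insert_iff, Set.mem_singleton_iff, not_or]
        exact ⟨e3, fun h' => e5 h'.symm⟩
      have p3 : ((y : G) : G ⧸ N) ∉ ({(x : G ⧸ N) * (y : G ⧸ N)} : Set (G ⧸ N)) := by
        simp only [Set.mem_singleton_iff]
        exact fun h' => e6 h'.symm
      rw [h1, huniv, Set.ncard_insert_of_notMem p1, Set.ncard_insert_of_notMem p2,
        Set.ncard_insert_of_notMem p3, Set.ncard_singleton]
    haveI : Nontrivial (G ⧸ N) := nontrivial_of_ne _ _ e1
    have hexp : Monoid.exponent (G ⧸ N) = 2 := by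
      rw [Monoid.exponent_eq_prime_iff Nat.prime_two]
      intro q hq
      exact orderOf_eq_prime (by rw [pow_two]; exact mk_sq q) hq
    haveI : IsKleinFour (G ⧸ N) := ⟨hcard, hexp⟩
    exact IsKleinFour.nonempty_mulEquiv
  · rintro ⟨e⟩
    constructor
    · refine ⟨{⟨x, px⟩, ⟨y, py⟩, ⟨x * y, pxy⟩}, ?_, ?_⟩
      · intro u hu v hv huv
        simp only [Finset.coe_insert, Set.mem_insert_iff, Finset.coe_singleton,
          Set.mem_singleton_iff] at hu hv
        rcases hu with rfl | rfl | rfl <;> rcases hv with rfl | rfl | rfl <;>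
          first
            | exact absurd rfl huv
            | exact NCG.mk_adj px py hxy | exact (NCG.mk_adj px py hxy).symm
            | exact NCG.mk_adj px pxy ncxy1 | exact (NCG.mk_adj px pxy ncxy1).symm
            | exact NCG.mk_adj py pxy ncxy2 | exact (NCG.mk_adj py pxy ncxy2).symm
      · rw [Finset.card_insert_of_notMem (by
            simp [Subtype.ext_iff, NCG.ne_of_nc hxy, NCG.ne_of_nc ncxy1]),
          Finset.card_insert_of_notMem (by simp [Subtype.ext_iff, NCG.ne_of_nc ncxy2]),
          Finset.card_singleton]
    · intro s hs
      haveI fQ : Fintype (G ⧸ N) := Fintype.ofEquiv _ e.toEquiv.symm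
      have hcardQ : Fintype.card (G ⧸ N) = 4 := by
        rw [← Nat.card_eq_fintype_card, Nat.card_congr e.toEquiv]
        simp
      set f : {g : G // g ∉ cyclicizer G} → G ⧸ N := fun v => ((v : G) : G ⧸ N) with hf
      have hinj : Set.InjOn f (s : Set _) := by
        intro u hu v hv huv
        by_contra hne
        have hadj := hs hu hv hne
        have hrel : (u : G)⁻¹ * (v : G) ∈ N := QuotientGroup.eq.mp huv
        exact hadj.2 (NCG.cyclic_of_rel (memN.mp hrel))
      have himage : s.image f ⊆ Finset.univ.erase 1 := by
        intro q hq
        simp only [Finset.mem_image] at hq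
        obtain ⟨v, hv, rfl⟩ := hq
        refine Finset.mem_erase.mpr ⟨?_, Finset.mem_univ _⟩
        rw [Ne, QuotientGroup.eq_one_iff]
        exact fun hm => v.2 (memN.mp hm)
      calc s.card = (s.image f).card := (Finset.card_image_of_injOn hinj).symm
        _ ≤ (Finset.univ.erase (1 : G ⧸ N)).card := Finset.card_le_card himage
        _ ≤ 3 := by
            rw [Finset.card_erase_of_mem (Finset.mem_univ _), Finset.card_univ, hcardQ]
end

section
/- Let G and H be finite non-cyclic groups with gcd(|G|,|H|) = 1. If the clique numbers of the non-cyclic graphs of G and H are n and m respectively, then the clique number of the non-cyclic graph of G × H is at least nm. -/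
/-- Image of a cyclic pair-closure under a hom is cyclic. -/
lemma map_pair_cyclic {G H : Type*} [Group G] [Group H] (f : G →* H) {a b : G}
    (h : IsCyclic (Subgroup.closure {a, b} : Subgroup G)) :
    IsCyclic (Subgroup.closure {f a, f b} : Subgroup H) := by
  have key : (Subgroup.closure {a, b}).map f = Subgroup.closure {f a, f b} := by
    rw [MonoidHom.map_closure, Set.image_pair]
  rw [← key]
  exact isCyclic_of_surjective (f.subgroupMap _) (f.subgroupMap_surjective _)

lemma fst_pair_cyclic {G H : Type*} [Group G] [Group H] {a c : G} {b d : H}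
    (h : IsCyclic (Subgroup.closure {(a, b), (c, d)} : Subgroup (G × H))) :
    IsCyclic (Subgroup.closure {a, c} : Subgroup G) := by
  have h2 := map_pair_cyclic (MonoidHom.fst G H) h
  exact h2

lemma snd_pair_cyclic {G H : Type*} [Group G] [Group H] {a c : G} {b d : H}
    (h : IsCyclic (Subgroup.closure {(a, b), (c, d)} : Subgroup (G × H))) :
    IsCyclic (Subgroup.closure {b, d} : Subgroup H) := by
  have h2 := map_pair_cyclic (MonoidHom.snd G H) h
  exact h2

lemma prod_not_mem_cyclicizer_left {G H : Type*} [Group G] [Group H] {g : G} (h : H)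
    (hg : g ∉ cyclicizer G) : (g, h) ∉ cyclicizer (G × H) := by
  intro hmem
  apply hg
  intro y
  have h1 : IsCyclic (Subgroup.closure {(g, h), (y, h)} : Subgroup (G × H)) := hmem (y, h)
  exact fst_pair_cyclic h1

/-- Embedding of the product of vertex sets. -/
def prodEmb (G H : Type*) [Group G] [Group H] :
    {g : G // g ∉ cyclicizer G} × {h : H // h ∉ cyclicizer H} ↪
      {p : G × H // p ∉ cyclicizer (G × H)} :=
  ⟨fun p => ⟨(p.1.1, p.2.1), prod_not_mem_cyclicizer_left _ p.1.2⟩, by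
    rintro ⟨⟨a, _⟩, ⟨b, _⟩⟩ ⟨⟨c, _⟩, ⟨d, _⟩⟩ h
    simp only [Subtype.mk.injEq, Prod.mk.injEq] at h
    simp [Prod.ext_iff, Subtype.ext_iff, h.1, h.2]⟩

theorem cliqueNum_prod_ge
    {G H : Type*} [Group G] [Group H] [Finite G] [Finite H]
    (hG : ¬ IsCyclic G) (hH : ¬ IsCyclic H)
    (hcop : Nat.Coprime (Nat.card G) (Nat.card H))
    (n m : ℕ) (hn : hasCliqueNum (noncyclicGraph G) n)
    (hm : hasCliqueNum (noncyclicGraph H) m)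
    (N : ℕ) (hN : hasCliqueNum (noncyclicGraph (G × H)) N) :
    n * m ≤ N := by
  obtain ⟨⟨s, hs⟩, -⟩ := hn
  obtain ⟨⟨t, ht⟩, -⟩ := hm
  obtain ⟨-, hmax⟩ := hN
  have hclique : (noncyclicGraph (G × H)).IsClique
      (((s ×ˢ t).map (prodEmb G H) : Finset _) : Set _) := by
    intro x hx y hy hxy
    simp only [Finset.coe_map, Set.mem_image, Finset.mem_coe, Finset.mem_product] at hx hy
    obtain ⟨⟨a, b⟩, ⟨has, hbt⟩, rfl⟩ := hx
    obtain ⟨⟨c, d⟩, ⟨hcs, hdt⟩, rfl⟩ := hy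
    refine ⟨hxy, ?_⟩
    intro hcyc
    have hc2 : IsCyclic (Subgroup.closure {((a : G), (b : H)), ((c : G), (d : H))} :
        Subgroup (G × H)) := hcyc
    by_cases hac : a = c
    · have hbd : b ≠ d := fun hbd => hxy (by rw [hac, hbd])
      have adj : (noncyclicGraph H).Adj b d := ht.isClique hbt hdt hbd
      have hH2 : IsCyclic (Subgroup.closure {(b : H), (d : H)} : Subgroup H) :=
        snd_pair_cyclic hc2
      exact adj.2 hH2
    · have adj : (noncyclicGraph G).Adj a c := hs.isClique has hcs hac
      have hG2 : IsCyclic (Subgroup.closure {(a : G), (c : G)} : Subgroup G) :=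
        fst_pair_cyclic hc2
      exact adj.2 hG2
  have hcard := hmax _ hclique
  rwa [Finset.card_map, Finset.card_product, hs.card_eq, ht.card_eq] at hcard
end

section
/- Let G be a finite non-cyclic group such that |G| + |Cyc(G)| > 2|Cyc_G(x)| for every x ∈ Z(G) \ Cyc(G). Then every vertex x of the non-cyclic graph of G has degree greater than (|G| − |Cyc(G)|)/2, and hence (by Dirac's theorem) the non-cyclic graph is Hamiltonian. -/
private lemma aux_isCyclic_zpowers {G : Type*} [Group G] (g : G) :
    IsCyclic (Subgroup.zpowers g) := by
  refine ⟨⟨⟨g, Subgroup.mem_zpowers g⟩, ?_⟩⟩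
  rintro ⟨x, hx⟩
  obtain ⟨k, hk⟩ := Subgroup.mem_zpowers_iff.mp hx
  refine Subgroup.mem_zpowers_iff.mpr ⟨k, ?_⟩
  ext
  simpa using hk

private lemma aux_mem_rel_self {G : Type*} [Group G] (x : G) : x ∈ relCyclicizer x := by
  show IsCyclic (Subgroup.closure {x, x} : Subgroup G)
  have h1 : ({x, x} : Set G) = {x} := by simp
  rw [h1, ← Subgroup.zpowers_eq_closure]
  exact aux_isCyclic_zpowers x

private lemma aux_one_mem_cyclicizer {G : Type*} [Group G] : (1 : G) ∈ cyclicizer G := by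
  intro y
  have h1 : Subgroup.closure ({1, y} : Set G) = Subgroup.closure {y} := by
    apply le_antisymm
    · apply Subgroup.closure_le _ |>.mpr
      intro z hz
      rcases hz with rfl | hz
      · exact Subgroup.one_mem _
      · simp at hz
        rw [hz]
        exact Subgroup.subset_closure rfl
    · exact Subgroup.closure_mono (by simp)
  rw [h1, ← Subgroup.zpowers_eq_closure]
  exact aux_isCyclic_zpowers y

private lemma aux_cyc_sub_rel {G : Type*} [Group G] (x : G) :
    cyclicizer G ⊆ relCyclicizer x := fun _ hg => hg x

private lemma aux_rel_sub_centralizer {G : Type*} [Group G] (x : G) :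
    relCyclicizer x ⊆ (Subgroup.centralizer {x} : Set G) := by
  intro g hg
  rw [SetLike.mem_coe, Subgroup.mem_centralizer_singleton_iff]
  letI := (hg : IsCyclic (Subgroup.closure {g, x} : Subgroup G)).commGroup
  have hgm : g ∈ Subgroup.closure ({g, x} : Set G) := Subgroup.subset_closure (by simp)
  have hxm : x ∈ Subgroup.closure ({g, x} : Set G) := Subgroup.subset_closure (by simp)
  have := mul_comm (⟨g, hgm⟩ : Subgroup.closure ({g, x} : Set G)) ⟨x, hxm⟩
  have := congrArg Subtype.val this
  simpa using this

private lemma aux_isCyclic_of_all {G : Type*} [Group G] [Finite G]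
    (hall : ∀ g : G, g ∈ cyclicizer G) : IsCyclic G := by
  have hcomm : ∀ x y : G, x * y = y * x := by
    intro x y
    letI := (hall x y : IsCyclic (Subgroup.closure {x, y} : Subgroup G)).commGroup
    have hxm : x ∈ Subgroup.closure ({x, y} : Set G) := Subgroup.subset_closure (by simp)
    have hym : y ∈ Subgroup.closure ({x, y} : Set G) := Subgroup.subset_closure (by simp)
    have := mul_comm (⟨x, hxm⟩ : Subgroup.closure ({x, y} : Set G)) ⟨y, hym⟩
    have := congrArg Subtype.val this
    simpa using this
  letI : CommGroup G := { ‹Group G› with mul_comm := hcomm }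
  obtain ⟨g, hg⟩ := Monoid.exists_orderOf_eq_exponent (Monoid.ExponentExists.of_finite (G := G))
  refine ⟨⟨g, ?_⟩⟩
  intro y
  have hcycH := hall g y
  obtain ⟨c0, hc0⟩ := hcycH.exists_generator
  set c : G := (c0 : G) with hcdef
  have hgm : g ∈ Subgroup.closure ({g, y} : Set G) := Subgroup.subset_closure (by simp)
  have hym : y ∈ Subgroup.closure ({g, y} : Set G) := Subgroup.subset_closure (by simp)
  have hgz : g ∈ Subgroup.zpowers c := by
    obtain ⟨k, hk⟩ := Subgroup.mem_zpowers_iff.mp (hc0 ⟨g, hgm⟩)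
    exact Subgroup.mem_zpowers_iff.mpr ⟨k, by simpa using congrArg Subtype.val hk⟩
  have hyz : y ∈ Subgroup.zpowers c := by
    obtain ⟨k, hk⟩ := Subgroup.mem_zpowers_iff.mp (hc0 ⟨y, hym⟩)
    exact Subgroup.mem_zpowers_iff.mpr ⟨k, by simpa using congrArg Subtype.val hk⟩
  have h1 : orderOf g ∣ orderOf c := orderOf_dvd_of_mem_zpowers hgz
  have h2 : orderOf c ∣ Monoid.exponent G := Monoid.order_dvd_exponent c
  have h3 : orderOf c = orderOf g := by
    rw [hg]
    refine Nat.dvd_antisymm h2 ?_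
    rw [← hg]; exact h1
  have h4 : Subgroup.zpowers g = Subgroup.zpowers c := by
    apply Subgroup.eq_of_le_of_card_ge (Subgroup.zpowers_le.mpr hgz)
    rw [Nat.card_zpowers, Nat.card_zpowers, h3]
  show y ∈ Subgroup.zpowers g
  rw [h4]
  exact hyz

open SimpleGraph Walk in
private lemma aux_getVert_injOn {V : Type*} {G : SimpleGraph V} :
    ∀ {a b : V} {p : G.Walk a b}, p.IsPath →
    ∀ ⦃i : ℕ⦄, i ≤ p.length → ∀ ⦃j : ℕ⦄, j ≤ p.length → p.getVert i = p.getVert j → i = j := by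
  intro a b p
  induction p with
  | nil => intro _ i hi j hj _; simp only [Walk.length_nil, Nat.le_zero] at hi hj; omega
  | cons h q ih =>
    intro hp i hi j hj hij
    rw [Walk.cons_isPath_iff] at hp
    match i, j with
    | 0, 0 => rfl
    | 0, j+1 =>
      exfalso
      apply hp.2
      rw [Walk.getVert_zero, Walk.getVert_cons_succ] at hij
      exact Walk.mem_support_iff_exists_getVert.mpr ⟨j, hij.symm, by simpa using hj⟩
    | i+1, 0 =>
      exfalso
      apply hp.2
      rw [Walk.getVert_zero, Walk.getVert_cons_succ] at hij
      exact Walk.mem_support_iff_exists_getVert.mpr ⟨i, hij, by simpa using hi⟩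
    | i+1, j+1 =>
      rw [Walk.getVert_cons_succ, Walk.getVert_cons_succ] at hij
      have := ih hp.1 (by simpa using hi) (by simpa using hj) hij
      omega

open SimpleGraph Walk in
private lemma aux_support_length_one {V : Type*} {G : SimpleGraph V} :
    ∀ {x y : V} (d : G.Walk x y), d.length = 1 → d.support = [x, y] := by
  intro x y d hd
  cases d with
  | nil => simp at hd
  | cons h d' =>
    cases d' with
    | nil => simp
    | cons h' d'' => simp [Walk.length_cons] at hd

open SimpleGraph Walk in
private lemma aux_dirac {V : Type*} [Fintype V] [DecidableEq V] (G : SimpleGraph V)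
    [DecidableRel G.Adj]
    (h3 : 3 ≤ Fintype.card V) (hdeg : ∀ v : V, Fintype.card V ≤ 2 * G.degree v) :
    G.IsHamiltonian := by
  classical
  intro _hcard
  set n := Fintype.card V with hn
  have hQ0 : ∃ (x y : V) (p : G.Walk x y), p.IsPath ∧ p.length = 0 := by
    obtain ⟨a⟩ : Nonempty V := Fintype.card_pos_iff.mp (by omega)
    exact ⟨a, a, Walk.nil, Walk.IsPath.nil, rfl⟩
  set Q : ℕ → Prop := fun ℓ => ∃ (x y : V) (p : G.Walk x y), p.IsPath ∧ p.length = ℓ with hQdef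
  set L := Nat.findGreatest Q n with hL
  have hQL : Q L := Nat.findGreatest_spec (Nat.zero_le n) hQ0
  have hmax : ∀ {x y : V} (q : G.Walk x y), q.IsPath → q.length ≤ L := by
    intro x y q hq
    exact Nat.le_findGreatest (le_of_lt hq.length_lt) ⟨x, y, q, hq, rfl⟩
  obtain ⟨a, b, p, hp, hpl⟩ := hQL
  have hnbra : ∀ c, G.Adj a c → c ∈ p.support := by
    intro c hac
    by_contra hc
    have hcp : (Walk.cons hac.symm p).IsPath := by
      rw [Walk.cons_isPath_iff]; exact ⟨hp, hc⟩
    have := hmax _ hcp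
    rw [Walk.length_cons, hpl] at this
    omega
  have hnbrb : ∀ c, G.Adj b c → c ∈ p.support := by
    intro c hbc
    by_contra hc
    have hcp : (Walk.cons hbc.symm p.reverse).IsPath := by
      rw [Walk.cons_isPath_iff]
      exact ⟨hp.reverse, by simpa using hc⟩
    have := hmax _ hcp
    rw [Walk.length_cons, Walk.length_reverse, hpl] at this
    omega
  have hsupcard : p.support.toFinset.card = L + 1 := by
    rw [List.toFinset_card_of_nodup hp.support_nodup, Walk.length_support, hpl]
  have hdegsub : ∀ {x : V}, (∀ c, G.Adj x c → c ∈ p.support) → x ∈ p.support →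
      G.degree x + 1 ≤ L + 1 := by
    intro x hx hxs
    rw [← hsupcard]
    have hsub : insert x (G.neighborFinset x) ⊆ p.support.toFinset := by
      intro y hy
      rcases Finset.mem_insert.mp hy with rfl | hy
      · simpa using hxs
      · simpa using hx y (by simpa using hy)
    calc G.degree x + 1 = (insert x (G.neighborFinset x)).card := by
          rw [Finset.card_insert_of_notMem (by simp), SimpleGraph.degree]
      _ ≤ p.support.toFinset.card := Finset.card_le_card hsub
  have hdega : G.degree a + 1 ≤ L + 1 := hdegsub hnbra p.start_mem_support
  have hdegb : G.degree b + 1 ≤ L + 1 := hdegsub hnbrb p.end_mem_support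
  have hL2 : 2 ≤ L := by have := hdeg a; omega
  -- pigeonhole on indices
  set S : Finset ℕ := (Finset.range L).filter (fun i => G.Adj a (p.getVert (i+1))) with hS
  set T : Finset ℕ := (Finset.range L).filter (fun i => G.Adj b (p.getVert i)) with hT
  have hchoose : ∀ {c : V} (h : c ∈ p.support), ∃ m, p.getVert m = c ∧ m ≤ p.length :=
    fun h => Walk.mem_support_iff_exists_getVert.mp h
  set f : V → ℕ := fun c => if h : c ∈ p.support then Classical.choose (hchoose h) else 0 with hf
  have hfspec : ∀ {c : V} (h : c ∈ p.support), p.getVert (f c) = c ∧ f c ≤ p.length := by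
    intro c h
    simp only [hf, dif_pos h]
    exact Classical.choose_spec (hchoose h)
  have hScard : G.degree a ≤ S.card := by
    apply Finset.card_le_card_of_injOn (fun c => f c - 1)
    · intro c hc
      have hac : G.Adj a c := by simpa using hc
      have hcs : c ∈ p.support := hnbra c hac
      obtain ⟨h1, h2⟩ := hfspec hcs
      have hf0 : f c ≠ 0 := by
        intro h0
        rw [h0, Walk.getVert_zero] at h1
        exact G.irrefl (h1 ▸ hac)
      simp only [hS, Finset.mem_coe, Finset.mem_filter, Finset.mem_range]
      constructor
      · omega
      · rw [Nat.sub_add_cancel (Nat.one_le_iff_ne_zero.mpr hf0), h1]; exact hac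
    · intro c hc d hd hcd
      have hcs : c ∈ p.support := hnbra c (by simpa using hc)
      have hds : d ∈ p.support := hnbra d (by simpa using hd)
      obtain ⟨h1, h2⟩ := hfspec hcs
      obtain ⟨h3, h4⟩ := hfspec hds
      have hc0 : f c ≠ 0 := by
        intro h0; rw [h0, Walk.getVert_zero] at h1
        exact G.irrefl (h1 ▸ (by simpa using hc : G.Adj a c))
      have hd0 : f d ≠ 0 := by
        intro h0; rw [h0, Walk.getVert_zero] at h3
        exact G.irrefl (h3 ▸ (by simpa using hd : G.Adj a d))
      have hcd' : f c - 1 = f d - 1 := hcd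
      have : f c = f d := by omega
      rw [← h1, ← h3, this]
  have hTcard : G.degree b ≤ T.card := by
    apply Finset.card_le_card_of_injOn f
    · intro c hc
      have hbc : G.Adj b c := by simpa using hc
      have hcs : c ∈ p.support := hnbrb c hbc
      obtain ⟨h1, h2⟩ := hfspec hcs
      have hfL : f c ≠ p.length := by
        intro h0
        rw [h0, Walk.getVert_length] at h1
        exact G.irrefl (h1 ▸ hbc)
      simp only [hT, Finset.mem_coe, Finset.mem_filter, Finset.mem_range]
      refine ⟨by omega, by rw [h1]; exact hbc⟩
    · intro c hc d hd hcd
      have hcs : c ∈ p.support := hnbrb c (by simpa using hc)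
      have hds : d ∈ p.support := hnbrb d (by simpa using hd)
      rw [← (hfspec hcs).1, ← (hfspec hds).1, hcd]
  have hinter : ∃ i, i ∈ S ∩ T := by
    have h1 := Finset.card_union_add_card_inter S T
    have h2 : (S ∪ T).card ≤ L := by
      have : S ∪ T ⊆ Finset.range L :=
        Finset.union_subset (Finset.filter_subset _ _) (Finset.filter_subset _ _)
      simpa using Finset.card_le_card this
    have h3' : L < n := by rw [← hpl]; exact hp.length_lt
    have h4 := hdeg a
    have h5 := hdeg b
    have : 0 < (S ∩ T).card := by omega
    obtain ⟨i, hi⟩ := Finset.card_pos.mp this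
    exact ⟨i, hi⟩
  obtain ⟨i, hi⟩ := hinter
  rw [Finset.mem_inter] at hi
  have hiL : i < L := by
    have := hi.1; rw [hS, Finset.mem_filter, Finset.mem_range] at this; exact this.1
  have hia : G.Adj a (p.getVert (i+1)) := by
    have := hi.1; rw [hS, Finset.mem_filter] at this; exact this.2
  have hib : G.Adj b (p.getVert i) := by
    have := hi.2; rw [hT, Finset.mem_filter] at this; exact this.2
  have hinj := @aux_getVert_injOn V G a b p hp
  -- split the path at w := p.getVert (i+1)
  have hwmem : p.getVert (i+1) ∈ p.support :=
    Walk.mem_support_iff_exists_getVert.mpr ⟨i+1, rfl, by omega⟩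
  set w := p.getVert (i+1) with hwdef
  set q := p.takeUntil w hwmem with hqdef
  set r := p.dropUntil w hwmem with hrdef
  have hqr : q.append r = p := p.take_spec hwmem
  have hqpath : q.IsPath := hp.takeUntil hwmem
  have hrpath : r.IsPath := hp.dropUntil hwmem
  have hlen : q.length + r.length = L := by
    have := congrArg Walk.length hqr
    rw [Walk.length_append] at this
    omega
  have hqlen : q.length = i + 1 := by
    have h2 := Walk.getVert_append q r q.length
    rw [hqr] at h2
    simp only [lt_irrefl, if_false, Nat.sub_self, Walk.getVert_zero] at h2
    exact hinj (by omega) (by omega) h2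
  have hql : q.length ≤ p.length := p.length_takeUntil_le hwmem
  have hqgetVert : ∀ j, j < q.length → q.getVert j = p.getVert j := by
    intro j hj
    have h2 := Walk.getVert_append q r j
    rw [hqr, if_pos hj] at h2
    exact h2.symm
  have humem : p.getVert i ∈ q.support := by
    refine Walk.mem_support_iff_exists_getVert.mpr ⟨i, ?_, by omega⟩
    exact hqgetVert i (by omega)
  set u := p.getVert i with hudef
  set q1 := q.takeUntil u humem with hq1def
  set d := q.dropUntil u humem with hddef
  have hq1d : q1.append d = q := q.take_spec humem
  have hq1path : q1.IsPath := hqpath.takeUntil humem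
  have hinjq := @aux_getVert_injOn V G a w q hqpath
  have hq1len : q1.length = i := by
    have h2 := Walk.getVert_append q1 d q1.length
    rw [hq1d] at h2
    simp only [lt_irrefl, if_false, Nat.sub_self, Walk.getVert_zero] at h2
    have hq1l : q1.length ≤ q.length := q.length_takeUntil_le humem
    have hu' : q.getVert i = u := hqgetVert i (by omega)
    exact hinjq (by omega) (by omega) (by rw [h2, ← hu'])
  have hdlen : d.length = 1 := by
    have := congrArg Walk.length hq1d
    rw [Walk.length_append] at this
    omega
  have hdsupp : d.support = [u, w] := aux_support_length_one d hdlen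
  have hqsupp : q.support = q1.support ++ [w] := by
    rw [← hq1d, Walk.support_append, hdsupp]
    rfl
  have hwq1 : w ∉ q1.support := by
    have hnd : (q1.support ++ [w]).Nodup := by rw [← hqsupp]; exact hqpath.support_nodup
    have := List.disjoint_of_nodup_append hnd
    intro hmem
    exact this hmem (by simp)
  have hqrdisj : ∀ x, x ∈ q.support → x ∈ r.support → x = w := by
    intro x hxq hxr
    by_contra hne
    have hx' : x ∈ r.support.tail := by
      have hcons := r.support_eq_cons
      rw [hcons] at hxr
      rcases List.mem_cons.mp hxr with h | h
      · exact absurd h hne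
      · exact h
    have hnd : (q.support ++ r.support.tail).Nodup := by
      rw [← Walk.support_append, hqr]; exact hp.support_nodup
    exact List.disjoint_of_nodup_append hnd hxq hx'
  have hub : G.Adj u b := hib.symm
  have hwa : G.Adj w a := hia.symm
  set P := q1.append (Walk.cons hub r.reverse) with hPdef
  have hPsupp : P.support = q1.support ++ r.support.reverse := by
    rw [hPdef, Walk.support_append, Walk.support_cons, List.tail_cons, Walk.support_reverse]
  have hPpath : P.IsPath := by
    apply Walk.IsPath.mk'
    rw [hPsupp]
    refine List.Nodup.append hq1path.support_nodup (by simpa using hrpath.support_nodup) ?_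
    intro x hx1 hx2
    have hxq : x ∈ q.support := by rw [hqsupp]; exact List.mem_append_left _ hx1
    have hxr : x ∈ r.support := by simpa using hx2
    have hxw := hqrdisj x hxq hxr
    rw [hxw] at hx1
    exact hwq1 hx1
  have hne_uw : u ≠ w := by
    intro h
    have := hinj (i := i) (by omega) (j := i+1) (by omega) h
    omega
  have hne_aw : a ≠ w := by
    intro h
    have h0 : p.getVert 0 = p.getVert (i+1) := by rw [Walk.getVert_zero]; exact h
    have := hinj (i := 0) (by omega) (j := i+1) (by omega) h0
    omega
  have hcyc : (Walk.cons hwa P).IsCycle := by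
    rw [Walk.cons_isCycle_iff]
    refine ⟨hPpath, ?_⟩
    intro hmem
    rw [hPdef, Walk.edges_append, Walk.edges_cons] at hmem
    rcases List.mem_append.mp hmem with h | h
    · exact hwq1 (q1.fst_mem_support_of_mem_edges h)
    · rcases List.mem_cons.mp h with h | h
      · rw [Sym2.eq_iff] at h
        rcases h with ⟨h1, h2⟩ | ⟨h1, h2⟩
        · exact hne_uw h1.symm
        · -- w = b and a = u
          have hb' : p.getVert p.length = b := p.getVert_length
          have h1' : p.getVert (i+1) = p.getVert p.length := by rw [hb']; exact h1
          have := hinj (by omega) (le_refl _) h1'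
          have h2' : p.getVert 0 = p.getVert i := by rw [Walk.getVert_zero]; exact h2
          have := hinj (i := 0) (by omega) (j := i) (by omega) h2'
          omega
      · have h' : s(w, a) ∈ r.edges := by
          rw [Walk.edges_reverse] at h
          exact List.mem_reverse.mp h
        have har : a ∈ r.support := r.snd_mem_support_of_mem_edges h'
        have haq : a ∈ q.support := q.start_mem_support
        exact hne_aw (hqrdisj a haq har)
  have hclen : (Walk.cons hwa P).length = L + 1 := by
    rw [Walk.length_cons, hPdef, Walk.length_append, Walk.length_cons, Walk.length_reverse]
    omega
  have hcsupp : ∀ x, x ∈ (Walk.cons hwa P).support ↔ x ∈ p.support := by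
    intro x
    rw [Walk.support_cons, List.mem_cons, hPsupp, List.mem_append]
    constructor
    · rintro (rfl | h | h)
      · exact hwmem
      · exact (p.support_takeUntil_subset hwmem) ((q.support_takeUntil_subset humem) h)
      · exact (p.support_dropUntil_subset hwmem) (by simpa using h)
    · intro hx
      have : x ∈ q.support ++ r.support.tail := by
        rw [← Walk.support_append, hqr]; exact hx
      rcases List.mem_append.mp this with h | h
      · rw [hqsupp] at h
        rcases List.mem_append.mp h with h | h
        · exact Or.inr (Or.inl h)
        · exact Or.inl (List.mem_singleton.mp h)
      · refine Or.inr (Or.inr ?_)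
        rw [List.mem_reverse]
        exact List.mem_of_mem_tail h
  by_cases hcover : ∀ x : V, x ∈ p.support
  · -- Hamiltonian cycle found
    refine ⟨w, Walk.cons hwa P, hcyc, ?_⟩
    have hallP : ∀ x : V, x ∈ P.support := by
      intro x
      rcases List.mem_cons.mp ((Walk.support_cons hwa P) ▸ (hcsupp x).mpr (hcover x)) with h | h
      · rw [h]; exact P.end_mem_support
      · exact h
    rw [Walk.tail_cons]
    have hcopy : (P.copy (Walk.getVert_zero P).symm rfl).IsPath := by
      simpa using hPpath
    apply hcopy.isHamiltonian_of_mem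
    intro x
    rw [Walk.support_copy]
    exact hallP x
  · exfalso
    push_neg at hcover
    obtain ⟨x, hx⟩ := hcover
    have hy : ∃ y ∈ p.support, G.Adj x y := by
      by_contra hno
      push_neg at hno
      have hsub : G.neighborFinset x ⊆ (p.support.toFinset ∪ {x})ᶜ := by
        intro y hy
        rw [Finset.mem_compl]
        intro hmem
        rcases Finset.mem_union.mp hmem with h | h
        · exact hno y (by simpa using h) (by simpa using hy)
        · have hyx : y = x := by simpa using h
          rw [SimpleGraph.mem_neighborFinset] at hy
          rw [hyx] at hy
          exact G.irrefl hy
      have hxcard : (p.support.toFinset ∪ {x}).card = L + 2 := by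
        rw [Finset.card_union_of_disjoint (by simpa using hx), hsupcard]
        simp
      have hdx : G.degree x ≤ n - (L + 2) := by
        calc G.degree x ≤ ((p.support.toFinset ∪ {x})ᶜ).card := Finset.card_le_card hsub
          _ = n - (L + 2) := by rw [Finset.card_compl, hxcard]
      have h4 := hdeg a
      have h5 := hdeg x
      have h6 : L + 2 ≤ n := by
        have : (p.support.toFinset ∪ {x}).card ≤ n := Finset.card_le_univ _
        omega
      omega
    obtain ⟨y, hy, hxy⟩ := hy
    have hyc : y ∈ (Walk.cons hwa P).support := (hcsupp y).mpr hy
    set c' := (Walk.cons hwa P).rotate y hyc with hc'def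
    have hc'cyc : c'.IsCycle := hcyc.rotate hyc
    have hc'nil : ¬ c'.Nil := hc'cyc.not_nil
    have hc'len : c'.length = L + 1 := by
      have h3' := congrArg Walk.length ((Walk.cons hwa P).take_spec hyc)
      rw [Walk.length_append] at h3'
      have : c'.length = ((Walk.cons hwa P).dropUntil y hyc).length
          + ((Walk.cons hwa P).takeUntil y hyc).length := by
        rw [hc'def, Walk.rotate, Walk.length_append]
      omega
    have htailsupp : ∀ z, z ∈ c'.support.tail → z ∈ p.support := by
      intro z hz
      have hperm := Walk.support_rotate (Walk.cons hwa P) y hyc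
      have hz' : z ∈ (Walk.cons hwa P).support.tail := hperm.mem_iff.mp hz
      exact (hcsupp z).mp (List.mem_of_mem_tail hz')
    have hxt : x ∉ c'.tail.support := by
      rw [Walk.support_tail_of_not_nil c' hc'nil]
      intro hmem
      exact hx (htailsupp x hmem)
    set pp := c'.tail.concat hxy.symm with hppdef
    have hppPath : pp.IsPath := by
      apply Walk.IsPath.mk'
      rw [hppdef, Walk.support_concat]
      refine List.Nodup.append ?_ (by simp) ?_
      · rw [Walk.support_tail_of_not_nil c' hc'nil]
        exact hc'cyc.support_nodup
      · intro z hz1 hz2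
        have : z = x := by simpa using hz2
        subst this
        exact hxt hz1
    have h7 := Walk.length_tail_add_one hc'nil
    have hpplen : pp.length = L + 1 := by
      rw [hppdef, Walk.length_concat]
      omega
    have := hmax pp hppPath
    omega



open scoped Classical in
theorem noncyclicGraph_hamiltonian_of_degree_condition
    {G : Type*} [Group G] [Fintype G] (hG : ¬ IsCyclic G)
    (h : ∀ x ∈ (Subgroup.center G : Set G), x ∉ cyclicizer G →
      2 * Nat.card (relCyclicizer x) < Nat.card G + Nat.card (cyclicizer G)) :
    (∀ v : {g : G // g ∉ cyclicizer G},
      Nat.card G - Nat.card (cyclicizer G) <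
        2 * Nat.card {w : {g : G // g ∉ cyclicizer G} // (noncyclicGraph G).Adj v w}) ∧
    (noncyclicGraph G).IsHamiltonian := by
  classical
  have hcount : ∀ v : {g : G // g ∉ cyclicizer G},
      Nat.card {w : {g : G // g ∉ cyclicizer G} // (noncyclicGraph G).Adj v w}
        = Nat.card G - Nat.card (relCyclicizer (v : G)) := by
    intro v
    have hvrel : (v : G) ∈ relCyclicizer (v : G) := aux_mem_rel_self _
    have he : {w : {g : G // g ∉ cyclicizer G} // (noncyclicGraph G).Adj v w}
        ≃ ((relCyclicizer (v : G))ᶜ : Set G) :=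
      { toFun := fun w => ⟨w.1.1, fun hmem => (show _ ≠ _ ∧ ¬ _ from w.2).2 (by rw [Set.pair_comm]; exact hmem)⟩
        invFun := fun g => ⟨⟨g.1, fun hc => g.2 (aux_cyc_sub_rel _ hc)⟩, by
          show _ ≠ _ ∧ ¬ _
          constructor
          · intro hh
            apply g.2
            have hv' : (g.1 : G) = (v : G) := (congrArg Subtype.val hh).symm
            show (g.1 : G) ∈ relCyclicizer (v : G)
            rw [hv']
            exact hvrel
          · intro hc
            apply g.2
            show IsCyclic (Subgroup.closure {(g.1 : G), (v : G)} : Subgroup G)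
            rwa [Set.pair_comm] at hc⟩
        left_inv := fun w => by
          apply Subtype.ext
          apply Subtype.ext
          rfl
        right_inv := fun g => by
          apply Subtype.ext
          rfl }
    rw [Nat.card_congr he]
    have hsum : Nat.card (relCyclicizer (v : G)) + Nat.card ((relCyclicizer (v : G))ᶜ : Set G)
        = Nat.card G := by
      rw [Nat.card_coe_set_eq, Nat.card_coe_set_eq]
      exact Set.ncard_add_ncard_compl _
    omega
  have hrel_le : ∀ v : G, Nat.card (relCyclicizer v) ≤ Nat.card G := by
    intro v
    have hsum : Nat.card (relCyclicizer v) + Nat.card ((relCyclicizer v)ᶜ : Set G)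
        = Nat.card G := by
      rw [Nat.card_coe_set_eq, Nat.card_coe_set_eq]
      exact Set.ncard_add_ncard_compl _
    omega
  have hcyc_le : ∀ v : G, Nat.card (cyclicizer G) ≤ Nat.card (relCyclicizer v) := by
    intro v
    rw [Nat.card_coe_set_eq, Nat.card_coe_set_eq]
    exact Set.ncard_le_ncard (aux_cyc_sub_rel _) (Set.toFinite _)
  have hcyc_pos : 1 ≤ Nat.card (cyclicizer G) := by
    haveI : Nonempty (cyclicizer G : Set G) := ⟨⟨1, aux_one_mem_cyclicizer⟩⟩
    exact Nat.card_pos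
  have hdeg2 : ∀ v : {g : G // g ∉ cyclicizer G},
      Nat.card G - Nat.card (cyclicizer G) <
        2 * Nat.card {w : {g : G // g ∉ cyclicizer G} // (noncyclicGraph G).Adj v w} := by
    intro v
    rw [hcount v]
    have h1 := hcyc_le (v : G)
    have h2 := hrel_le (v : G)
    by_cases hc : (v : G) ∈ (Subgroup.center G : Set G)
    · have h3 := h _ hc v.2
      omega
    · have hcent : Subgroup.centralizer {(v : G)} ≠ ⊤ := by
        intro htop
        exact hc (Subgroup.centralizer_eq_top_iff_subset.mp htop rfl)
      have hidx : 2 ≤ (Subgroup.centralizer {(v : G)}).index := by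
        have ha : (Subgroup.centralizer {(v : G)}).index ≠ 1 :=
          fun h' => hcent (Subgroup.index_eq_one.mp h')
        have hb : (Subgroup.centralizer {(v : G)}).index ≠ 0 :=
          Subgroup.index_ne_zero_of_finite
        omega
      have hcard := Subgroup.card_mul_index (Subgroup.centralizer {(v : G)})
      have h4 : Nat.card (relCyclicizer (v : G))
          ≤ Nat.card (Subgroup.centralizer {(v : G)}) := by
        rw [← SetLike.coe_sort_coe]
        rw [Nat.card_coe_set_eq, Nat.card_coe_set_eq]
        exact Set.ncard_le_ncard (aux_rel_sub_centralizer _) (Set.toFinite _)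
      have h5 : Nat.card (Subgroup.centralizer {(v : G)}) * 2
          ≤ Nat.card (Subgroup.centralizer {(v : G)})
            * (Subgroup.centralizer {(v : G)}).index :=
        Nat.mul_le_mul_left _ hidx
      omega
  refine ⟨hdeg2, ?_⟩
  have hdegeq : ∀ v : {g : G // g ∉ cyclicizer G},
      Nat.card {w : {g : G // g ∉ cyclicizer G} // (noncyclicGraph G).Adj v w}
        = (noncyclicGraph G).degree v := by
    intro v
    rw [← SimpleGraph.card_neighborSet_eq_degree, ← Nat.card_eq_fintype_card]
    exact Nat.card_congr (Equiv.subtypeEquivRight fun w => Iff.rfl)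
  have hcardV : Fintype.card {g : G // g ∉ cyclicizer G}
      = Nat.card G - Nat.card (cyclicizer G) := by
    rw [← Nat.card_eq_fintype_card]
    have he2 : {g : G // g ∉ cyclicizer G} ≃ ((cyclicizer G)ᶜ : Set G) :=
      Equiv.subtypeEquivRight fun g => (Set.mem_compl_iff _ _).symm
    rw [Nat.card_congr he2]
    have hsum : Nat.card (cyclicizer G) + Nat.card ((cyclicizer G)ᶜ : Set G)
        = Nat.card G := by
      rw [Nat.card_coe_set_eq, Nat.card_coe_set_eq]
      exact Set.ncard_add_ncard_compl _
    omega
  obtain ⟨g0, hg0⟩ : ∃ g : G, g ∉ cyclicizer G := by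
    by_contra hno
    push_neg at hno
    exact hG (aux_isCyclic_of_all hno)
  have h3' : 3 ≤ Fintype.card {g : G // g ∉ cyclicizer G} := by
    have hv := hdeg2 ⟨g0, hg0⟩
    rw [hdegeq] at hv
    have hlt := (noncyclicGraph G).degree_lt_card_verts ⟨g0, hg0⟩
    rw [hcardV] at hlt
    omega
  apply aux_dirac _ h3'
  intro v
  have hv := hdeg2 v
  rw [hdegeq] at hv
  rw [hcardV]
  omega
end
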